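/- arXiv:2512.17683 — 5 statements merged into one kernel-verified Lean document; each statement's English description precedes it below -/
import Mathlib

section
/- Let u be a strongly irreducible sequence with exactly r ≥ 2 distinct letters in which every letter of u occurs more than once. Then there exists a doubly infinite sequence s : ℤ → A over the alphabet A = {a_1,…,a_{r−1}} ⊔ ℤ (the disjoint union of an (r−1)-element set with a countably infinite set) that is u-saturated. -/
/-- `v` is a *copy* of `u`: it is obtained from `u` by an injective renaming of letters. -/
def IsCopy {α β : Type*} (v : List β) (u : List α) : Prop :=
  ∃ f : α → β, (∀ x ∈ u, ∀ y ∈ u, f x = f y → x = y) ∧ v = u.map f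

/-- `s` contains a copy of `u` as a (not necessarily contiguous) subsequence. -/
def ContainsCopy {α β : Type*} (s : List β) (u : List α) : Prop :=
  ∃ v : List β, v.Sublist s ∧ IsCopy v u

/-- `s` is `r`-sparse: any `r` consecutive letters of `s` are pairwise distinct. -/
def Sparse {A : Type*} (r : ℕ) (s : List A) : Prop :=
  ∀ (i j : ℕ) (hij : i < j) (hj : j < s.length), j < i + r →
    s.get ⟨i, hij.trans hj⟩ ≠ s.get ⟨j, hj⟩

/-- `s` is a `u`-saturated sequence over the alphabet `alphabet`:
`s` uses letters from `alphabet`, is `r`-sparse (where `r` is the number of distinct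
letters of `u`), avoids `u`, and inserting any letter of `alphabet` at any position
violates `r`-sparsity or creates a copy of `u`. -/
def Saturated {α A : Type*} [DecidableEq α] (u : List α) (s : List A) (alphabet : Set A) : Prop :=
  Sparse u.toFinset.card s ∧ ¬ ContainsCopy s u ∧ (∀ x ∈ s, x ∈ alphabet) ∧
  ∀ x ∈ alphabet, ∀ i ≤ s.length,
    ¬ Sparse u.toFinset.card (s.insertIdx i x) ∨ ContainsCopy (s.insertIdx i x) u

/-- A doubly infinite sequence is `r`-sparse if any `r` consecutive terms are pairwise
distinct. -/
def SparseZ {A : Type*} (r : ℕ) (s : ℤ → A) : Prop :=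
  ∀ i j : ℤ, i < j → j < i + r → s i ≠ s j

/-- A doubly infinite sequence `s` contains a copy of `u` if the terms of `s` along some
finite strictly increasing sequence of indices form a sequence isomorphic to `u`. -/
def ContainsCopyZ {α A : Type*} (s : ℤ → A) (u : List α) : Prop :=
  ∃ ix : List ℤ, ix.Pairwise (· < ·) ∧ IsCopy (ix.map s) u

/-- The doubly infinite sequence obtained from `s` by inserting the letter `x` between
positions `m` and `m+1`. -/
def insertZ {A : Type*} (s : ℤ → A) (m : ℤ) (x : A) : ℤ → A :=
  fun i => if i ≤ m then s i else if i = m + 1 then x else s (i - 1)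

/-- A doubly infinite sequence `s` over `alphabet` is `u`-saturated. -/
def SaturatedZ {α A : Type*} [DecidableEq α] (u : List α) (s : ℤ → A) (alphabet : Set A) :
    Prop :=
  SparseZ u.toFinset.card s ∧ ¬ ContainsCopyZ s u ∧ (∀ i, s i ∈ alphabet) ∧
  ∀ x ∈ alphabet, ∀ m : ℤ,
    ¬ SparseZ u.toFinset.card (insertZ s m x) ∨ ContainsCopyZ (insertZ s m x) u

/-- `u` is strongly irreducible: for any two distinct letters `a, b` of `u`, it is not the
case that every occurrence of `a` precedes every occurrence of `b`. -/
def StronglyIrreducibleSeq {α : Type*} (u : List α) : Prop :=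
  ∀ a ∈ u, ∀ b ∈ u, a ≠ b →
    ¬ ∀ (i j : ℕ) (hi : i < u.length) (hj : j < u.length),
        u.get ⟨i, hi⟩ = a → u.get ⟨j, hj⟩ = b → i < j


/-- The model sequence: rainbows `0,1,...,n-1` of the `Fin n` letters, with a "special"
letter every `n+1` positions; the special letters come in clusters of `N` consecutive
special slots sharing the same integer label. -/
def s7fun (n N : ℕ) : ℤ → Fin n ⊕ ℤ := fun i =>
  if h : ((i % ((n : ℤ)+1)).toNat < n) then Sum.inl ⟨(i % ((n : ℤ)+1)).toNat, h⟩
  else Sum.inr ((i / ((n : ℤ)+1)) / (N : ℤ))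

lemma s7_emod_nonneg (n : ℕ) (i : ℤ) : 0 ≤ i % ((n : ℤ)+1) :=
  Int.emod_nonneg _ (by positivity)

lemma s7_emod_lt (n : ℕ) (i : ℤ) : i % ((n : ℤ)+1) < (n : ℤ)+1 :=
  Int.emod_lt_of_pos _ (by positivity)

lemma s7fun_inl (n N : ℕ) (q t : ℤ) (h0 : 0 ≤ t) (ht : t < n) :
    s7fun n N (q*((n : ℤ)+1)+t) = Sum.inl ⟨t.toNat, by omega⟩ := by
  have he : (q*((n : ℤ)+1)+t) % ((n : ℤ)+1) = t := by
    rw [add_comm, Int.add_mul_emod_self_right]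
    exact Int.emod_eq_of_lt h0 (by omega)
  unfold s7fun
  rw [he]
  have : t.toNat < n := by omega
  simp [this]

lemma s7fun_inr (n N : ℕ) (q : ℤ) :
    s7fun n N (q*((n : ℤ)+1)+(n : ℤ)) = Sum.inr (q / (N : ℤ)) := by
  have he : (q*((n : ℤ)+1)+(n : ℤ)) % ((n : ℤ)+1) = n := by
    rw [add_comm, Int.add_mul_emod_self_right]
    exact Int.emod_eq_of_lt (by positivity) (by omega)
  have hd : (q*((n : ℤ)+1)+(n : ℤ)) / ((n : ℤ)+1) = q := by
    rw [add_comm, Int.add_mul_ediv_right _ _ (by positivity : ((n : ℤ)+1) ≠ 0)]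
    rw [Int.ediv_eq_zero_of_lt (by positivity) (by omega)]
    ring
  unfold s7fun
  rw [he, hd]
  simp

lemma s7fun_emod_of_inl {n N : ℕ} {i : ℤ} {t : Fin n} (h : s7fun n N i = Sum.inl t) :
    i % ((n : ℤ)+1) = (t : ℤ) := by
  unfold s7fun at h
  split_ifs at h with h1
  · have h2 := (Sum.inl.injEq _ _).mp h
    have h3 : ((i % ((n : ℤ)+1)).toNat : ℤ) = (t : ℤ) := by
      rw [← h2]
    rw [Int.toNat_of_nonneg (s7_emod_nonneg n i)] at h3
    exact h3

lemma s7fun_of_inr {n N : ℕ} {i k : ℤ} (h : s7fun n N i = Sum.inr k) :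
    i % ((n : ℤ)+1) = (n : ℤ) ∧ (i / ((n : ℤ)+1)) / (N : ℤ) = k := by
  unfold s7fun at h
  split_ifs at h with h1
  · have h2 := s7_emod_lt n i
    have h3 := s7_emod_nonneg n i
    refine ⟨by omega, (Sum.inr.injEq _ _).mp h⟩

lemma s7_ediv_eq_iff {q k : ℤ} {N : ℕ} (hN : 0 < N) :
    q / (N : ℤ) = k ↔ k*(N : ℤ) ≤ q ∧ q < k*(N : ℤ) + (N : ℤ) := by
  constructor
  · intro h
    have h1 := Int.mul_ediv_add_emod q (N : ℤ)
    have h2 := Int.emod_nonneg q (by positivity : (N : ℤ) ≠ 0)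
    have h3 := Int.emod_lt_of_pos q (by positivity : (0 : ℤ) < N)
    rw [h] at h1
    constructor <;> nlinarith [h1, h2, h3]
  · rintro ⟨h1, h2⟩
    have := (Int.ediv_emod_unique (a := q) (b := (N : ℤ)) (r := q - k*(N : ℤ)) (q := k)
      (by omega : (0:ℤ) < (N:ℤ))).mpr ⟨by ring, by omega, by omega⟩
    exact this.1

/-- positions carrying the value `inr k`. -/
lemma s7fun_eq_inr_iff {n N : ℕ} (hN : 0 < N) {p k : ℤ} :
    s7fun n N p = Sum.inr k ↔ ∃ j : ℤ, 0 ≤ j ∧ j < (N : ℤ) ∧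
      p = (k*(N : ℤ)+j)*((n : ℤ)+1)+(n : ℤ) := by
  constructor
  · intro h
    obtain ⟨h1, h2⟩ := s7fun_of_inr h
    rw [s7_ediv_eq_iff hN] at h2
    refine ⟨p / ((n : ℤ)+1) - k*(N : ℤ), by omega, by omega, ?_⟩
    have h3 := Int.mul_ediv_add_emod p ((n : ℤ)+1)
    rw [h1] at h3
    ring_nf
    ring_nf at h3
    omega
  · rintro ⟨j, h0, hj, rfl⟩
    rw [s7fun_inr]
    congr 1
    rw [s7_ediv_eq_iff hN]
    omega

section
/-! Part 2: sparsity, availability, greedy lemmas, sorted splitting. -/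

lemma s7fun_sparse (n N : ℕ) : SparseZ (n+1) (s7fun n N) := by
  intro i j hij hlt heq
  have hmod : i % ((n : ℤ)+1) = j % ((n : ℤ)+1) := by
    rcases h : s7fun n N i with t | k
    · rw [h] at heq
      rw [s7fun_emod_of_inl h, s7fun_emod_of_inl heq.symm]
    · rw [h] at heq
      rw [(s7fun_of_inr h).1, (s7fun_of_inr heq.symm).1]
  rw [Int.emod_eq_emod_iff_emod_sub_eq_zero] at hmod
  have hdvd : ((n : ℤ)+1) ∣ (i - j) := Int.dvd_of_emod_eq_zero hmod
  have hdvd2 : ((n : ℤ)+1) ∣ (j - i) := by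
    have := dvd_neg.mpr hdvd
    rwa [neg_sub] at this
  have hle : ((n : ℤ)+1) ≤ j - i := Int.le_of_dvd (by omega) hdvd2
  push_cast at hlt
  omega

lemma s7_exists_inl_gt (n N : ℕ) (t : Fin n) (B : ℤ) :
    ∃ p, B < p ∧ s7fun n N p = Sum.inl t := by
  refine ⟨(|B|+1)*((n : ℤ)+1)+(t : ℤ), ?_, ?_⟩
  · have h1 : (|B|+1) * 1 ≤ (|B|+1)*((n : ℤ)+1) :=
      mul_le_mul_of_nonneg_left (by push_cast; omega) (by positivity)
    have h2 : B ≤ |B| := le_abs_self B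
    have h3 : (0:ℤ) ≤ (t : ℤ) := by positivity
    omega
  · rw [s7fun_inl n N _ _ (by positivity) (by exact_mod_cast t.2)]
    exact congrArg Sum.inl (Fin.ext (by simp))

lemma s7_exists_inl_lt (n N : ℕ) (t : Fin n) (B : ℤ) :
    ∃ p, p < B ∧ s7fun n N p = Sum.inl t := by
  refine ⟨(-(|B|+(n:ℤ)+1))*((n : ℤ)+1)+(t : ℤ), ?_, ?_⟩
  · have h1 : (-(|B|+(n:ℤ)+1))*((n : ℤ)+1) ≤ (-(|B|+(n:ℤ)+1)) * 1 := by
      have hb : (0:ℤ) ≤ |B| := abs_nonneg B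
      have : -(|B|+(n:ℤ)+1) ≤ 0 := by omega
      exact mul_le_mul_of_nonpos_left (by omega) this
    have h2 : -|B| ≤ B := neg_abs_le B
    have h3 : (t : ℤ) < (n:ℤ) := by exact_mod_cast t.2
    omega
  · rw [s7fun_inl n N _ _ (by positivity) (by exact_mod_cast t.2)]
    exact congrArg Sum.inl (Fin.ext (by simp))

/-- Greedy embedding of a word of `inl`-letters to the right of any bound. -/
lemma s7_greedy_gt {n : ℕ} (h : ℤ → Fin n ⊕ ℤ)
    (avail : ∀ (t : Fin n) (B : ℤ), ∃ p, B < p ∧ h p = Sum.inl t) :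
    ∀ (v : List (Fin n)) (B : ℤ), ∃ ix : List ℤ, ix.Pairwise (· < ·) ∧
      (∀ p ∈ ix, B < p) ∧ ix.map h = v.map Sum.inl := by
  intro v
  induction v with
  | nil => exact fun B => ⟨[], by simp, by simp, by simp⟩
  | cons t v ih =>
    intro B
    obtain ⟨p, hp, hval⟩ := avail t B
    obtain ⟨ix, hs, hb, hm⟩ := ih p
    refine ⟨p :: ix, ?_, ?_, ?_⟩
    · exact List.pairwise_cons.mpr ⟨hb, hs⟩
    · intro q hq
      rcases List.mem_cons.mp hq with rfl | hq
      · exact hp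
      · exact hp.trans (hb q hq)
    · simp [hval, hm]

/-- Greedy embedding of a word of `inl`-letters to the left of any bound. -/
lemma s7_greedy_lt {n : ℕ} (h : ℤ → Fin n ⊕ ℤ)
    (avail : ∀ (t : Fin n) (B : ℤ), ∃ p, p < B ∧ h p = Sum.inl t) :
    ∀ (v : List (Fin n)) (B : ℤ), ∃ ix : List ℤ, ix.Pairwise (· < ·) ∧
      (∀ p ∈ ix, p < B) ∧ ix.map h = v.map Sum.inl := by
  intro v
  induction v using List.reverseRecOn with
  | nil => exact fun B => ⟨[], by simp, by simp, by simp⟩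
  | append_singleton v t ih =>
    intro B
    obtain ⟨p, hp, hval⟩ := avail t B
    obtain ⟨ix, hs, hb, hm⟩ := ih p
    refine ⟨ix ++ [p], ?_, ?_, ?_⟩
    · refine List.pairwise_append.mpr ⟨hs, by simp, ?_⟩
      intro a ha b hb'
      rcases List.mem_singleton.mp hb' with rfl
      exact hb a ha
    · intro q hq
      rcases List.mem_append.mp hq with hq | hq
      · exact (hb q hq).trans hp
      · rcases List.mem_singleton.mp hq with rfl; exact hp
    · simp [hval, hm]

/-- Splitting a sorted list at a threshold. -/
lemma s7_sorted_split {ix : List ℤ} (hs : ix.Pairwise (· < ·)) (A : ℤ) :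
    ∃ L₁ L₂ : List ℤ, ix = L₁ ++ L₂ ∧ (∀ p ∈ L₁, p < A) ∧ (∀ p ∈ L₂, A ≤ p) := by
  induction ix with
  | nil => exact ⟨[], [], by simp, by simp, by simp⟩
  | cons p rest ih =>
    have hs' : rest.Pairwise (· < ·) := (List.pairwise_cons.mp hs).2
    by_cases hp : p < A
    · obtain ⟨L₁, L₂, he, h1, h2⟩ := ih hs'
      exact ⟨p :: L₁, L₂, by simp [he], by
        intro q hq
        rcases List.mem_cons.mp hq with rfl | hq
        · exact hp
        · exact h1 q hq, h2⟩
    · refine ⟨[], p :: rest, by simp, by simp, ?_⟩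
      intro q hq
      rcases List.mem_cons.mp hq with rfl | hq
      · omega
      · exact le_of_lt (lt_of_le_of_lt (by omega) ((List.pairwise_cons.mp hs).1 q hq))

lemma s7_all_inl {n : ℕ} {w : List (Fin n ⊕ ℤ)} (h : ∀ y ∈ w, ∃ t, y = Sum.inl t) :
    ∃ v : List (Fin n), w = v.map Sum.inl := by
  induction w with
  | nil => exact ⟨[], by simp⟩
  | cons y w ih =>
    obtain ⟨t, rfl⟩ := h y (by simp)
    obtain ⟨v, rfl⟩ := ih (fun z hz => h z (by simp [hz]))
    exact ⟨t :: v, by simp⟩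

/-- Clusters are ordered: positions with value `inr k` all precede those with `inr k'`
when `k < k'`. -/
lemma s7_cluster_mono {n N : ℕ} (hN : 0 < N) {k k' p p' : ℤ} (hkk : k < k')
    (h : s7fun n N p = Sum.inr k) (h' : s7fun n N p' = Sum.inr k') : p < p' := by
  obtain ⟨j, hj0, hjN, rfl⟩ := (s7fun_eq_inr_iff hN).mp h
  obtain ⟨j', hj0', hjN', rfl⟩ := (s7fun_eq_inr_iff hN).mp h'
  have h1 : k*(N : ℤ)+j < k'*(N : ℤ)+j' := by nlinarith
  nlinarith [h1]

end
section
variable {α : Type*} [DecidableEq α]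

/-- Basic consequence of a copy: lengths agree. -/
lemma s7_copy_len {β : Type*} {h : ℤ → β} {ix : List ℤ} {f : α → β} {u : List α}
    (hmap : ix.map h = u.map f) : ix.length = u.length := by
  have := congrArg List.length hmap
  simpa using this

lemma s7_copy_get {β : Type*} {h : ℤ → β} {ix : List ℤ} {f : α → β} {u : List α}
    (hmap : ix.map h = u.map f) (i : ℕ) (hi : i < u.length) (hix : i < ix.length) :
    h (ix.get ⟨i, hix⟩) = f (u.get ⟨i, hi⟩) := by
  have h1 : (ix.map h)[i]? = (u.map f)[i]? := by rw [hmap]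
  rw [List.getElem?_map, List.getElem?_map] at h1
  rw [List.getElem?_eq_getElem (by simpa using hix), List.getElem?_eq_getElem (by simpa using hi)] at h1
  simp only [Option.map_some, Option.some.injEq] at h1
  simpa using h1

/-- In any copy of `u` inside a "clustered" sequence, exactly one letter of `u` is
mapped to an `inr` value; all others are mapped to `inl` letters. -/
lemma s7_copy_structure {n : ℕ} (hn : 0 < n) {u : List α}
    (hcard : u.toFinset.card = n+1) (hsi : StronglyIrreducibleSeq u)
    {h : ℤ → Fin n ⊕ ℤ}
    (hmono : ∀ {k k' p p' : ℤ}, k < k' → h p = Sum.inr k → h p' = Sum.inr k' → p < p')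
    {ix : List ℤ} {f : α → Fin n ⊕ ℤ}
    (hsort : ix.Pairwise (· < ·))
    (hinj : ∀ x ∈ u, ∀ y ∈ u, f x = f y → x = y)
    (hmap : ix.map h = u.map f) :
    ∃ c k, c ∈ u ∧ f c = Sum.inr k ∧ ∀ a ∈ u, a ≠ c → ∃ t, f a = Sum.inl t := by
  have hlen : ix.length = u.length := s7_copy_len hmap
  -- pigeonhole: some letter goes to an inr value
  have hex : ∃ c ∈ u, ∃ k, f c = Sum.inr k := by
    by_contra hno
    push_neg at hno
    set g : α → Fin n := fun a => Sum.elim id (fun _ => ⟨0, hn⟩) (f a) with hg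
    have hginj : Set.InjOn g u.toFinset := by
      intro a ha b hb hab
      simp only [Finset.mem_coe, List.mem_toFinset] at ha hb
      obtain ⟨ta, hta⟩ : ∃ ta, f a = Sum.inl ta := by
        rcases hfa : f a with ta | ka
        · exact ⟨ta, rfl⟩
        · exact absurd hfa (hno a ha ka)
      obtain ⟨tb, htb⟩ : ∃ tb, f b = Sum.inl tb := by
        rcases hfb : f b with tb | kb
        · exact ⟨tb, rfl⟩
        · exact absurd hfb (hno b hb kb)
      apply hinj a ha b hb
      rw [hta, htb]
      simp only [hg, hta, htb, Sum.elim_inl, id_eq] at hab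
      rw [hab]
    have hcle : u.toFinset.card ≤ (Finset.univ : Finset (Fin n)).card :=
      Finset.card_le_card_of_injOn g (fun a _ => Finset.mem_univ _) hginj
    rw [hcard, Finset.card_univ, Fintype.card_fin] at hcle
    omega
  obtain ⟨c, hc, k, hck⟩ := hex
  -- ordering helper
  have horder : ∀ a ∈ u, ∀ b ∈ u, ∀ ka kb : ℤ, f a = Sum.inr ka → f b = Sum.inr kb →
      ka < kb → ∀ (i j : ℕ) (hi : i < u.length) (hj : j < u.length),
        u.get ⟨i, hi⟩ = a → u.get ⟨j, hj⟩ = b → i < j := by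
    intro a ha b hb ka kb hfa hfb hkk i j hi hj hia hjb
    have hilen : i < ix.length := by omega
    have hjlen : j < ix.length := by omega
    have hpi : h (ix.get ⟨i, hilen⟩) = Sum.inr ka := by
      rw [s7_copy_get hmap i hi hilen, hia, hfa]
    have hpj : h (ix.get ⟨j, hjlen⟩) = Sum.inr kb := by
      rw [s7_copy_get hmap j hj hjlen, hjb, hfb]
    have hplt : ix.get ⟨i, hilen⟩ < ix.get ⟨j, hjlen⟩ := hmono hkk hpi hpj
    rcases lt_trichotomy i j with hh | hh | hh
    · exact hh
    · exfalso
      subst hh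
      rw [hpi] at hpj
      have : ka = kb := by
        simpa using hpj
      omega
    · exfalso
      have hji' : (⟨j, hjlen⟩ : Fin ix.length) < ⟨i, hilen⟩ := by
        simpa [Fin.lt_def] using hh
      have h2 := List.pairwise_iff_get.mp hsort _ _ hji'
      exact absurd (hplt.trans h2) (lt_irrefl _)
  refine ⟨c, k, hc, hck, ?_⟩
  intro a ha hac
  rcases hfa : f a with ta | ka
  · exact ⟨ta, rfl⟩
  · exfalso
    have hkka : ka ≠ k := by
      intro hh
      exact hac (hinj a ha c hc (by rw [hfa, hck, hh]))
    rcases lt_or_gt_of_ne hkka with hlt | hgt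
    · exact hsi a ha c hc hac (horder a ha c hc ka k hfa hck hlt)
    · exact hsi c hc a ha (Ne.symm hac) (horder c hc a ha k ka hck hfa hgt)
end

/-- Two positions of a letter occurring at least twice. -/
lemma s7_two_get {α : Type*} [DecidableEq α] :
    ∀ {u : List α} {c : α}, 2 ≤ u.count c →
    ∃ (i j : ℕ) (hi : i < u.length) (hj : j < u.length), i < j ∧
      u.get ⟨i, hi⟩ = c ∧ u.get ⟨j, hj⟩ = c := by
  intro u
  induction u with
  | nil => intro c h2; simp at h2
  | cons a l ih =>
    intro c h2
    by_cases hac : a = c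
    · subst hac
      have h1 : 1 ≤ l.count a := by
        rw [List.count_cons_self] at h2
        omega
      have hmem : a ∈ l := by
        rw [← List.count_pos_iff]
        omega
      obtain ⟨⟨j, hj⟩, hjv⟩ := List.mem_iff_get.mp hmem
      exact ⟨0, j+1, by simp, by simp; omega, by omega, rfl, by simpa using hjv⟩
    · have h2' : 2 ≤ l.count c := by
        rw [List.count_cons] at h2
        simp [hac] at h2
        omega
      obtain ⟨i, j, hi, hj, hij, hiv, hjv⟩ := ih h2'
      exact ⟨i+1, j+1, by simp; omega, by simp; omega, by omega,
        by simpa using hiv, by simpa using hjv⟩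

/-- Base case: the model with singleton clusters avoids `u`. -/
lemma s7_base {α : Type*} [DecidableEq α] {n : ℕ} (hn : 0 < n) {u : List α}
    (hcard : u.toFinset.card = n+1) (hocc : ∀ x ∈ u, 2 ≤ u.count x)
    (hsi : StronglyIrreducibleSeq u) : ¬ ContainsCopyZ (s7fun n 1) u := by
  rintro ⟨ix, hsort, f, hinj, hmap⟩
  obtain ⟨c, k, hc, hck, -⟩ := s7_copy_structure hn hcard hsi
    (fun hkk hp hp' => s7_cluster_mono (by norm_num) hkk hp hp') hsort hinj hmap
  obtain ⟨i, j, hi, hj, hij, hiv, hjv⟩ := s7_two_get (hocc c hc)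
  have hilen : i < ix.length := by rw [s7_copy_len hmap]; omega
  have hjlen : j < ix.length := by rw [s7_copy_len hmap]; omega
  have hpi : s7fun n 1 (ix.get ⟨i, hilen⟩) = Sum.inr k := by
    rw [s7_copy_get hmap i hi hilen, hiv, hck]
  have hpj : s7fun n 1 (ix.get ⟨j, hjlen⟩) = Sum.inr k := by
    rw [s7_copy_get hmap j hj hjlen, hjv, hck]
  obtain ⟨j1, hj10, hj11, he1⟩ := (s7fun_eq_inr_iff (by norm_num)).mp hpi
  obtain ⟨j2, hj20, hj21, he2⟩ := (s7fun_eq_inr_iff (by norm_num)).mp hpj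
  have hij' : (⟨i, hilen⟩ : Fin ix.length) < ⟨j, hjlen⟩ := by
    simpa [Fin.lt_def] using hij
  have hlt := List.pairwise_iff_get.mp hsort _ _ hij'
  have hj1 : j1 = 0 := by omega
  have hj2 : j2 = 0 := by omega
  rw [hj1] at he1
  rw [hj2] at he2
  rw [he1, he2] at hlt
  exact absurd hlt (lt_irrefl _)

/-- Diagonal embedding: the model with clusters of size `u.length` contains `u`. -/
lemma s7_diag {α : Type*} [DecidableEq α] {n : ℕ} (hn : 0 < n) {u : List α}
    (hcard : u.toFinset.card = n+1) :
    ContainsCopyZ (s7fun n u.length) u := by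
  have hne : u.toFinset.Nonempty := by
    rw [← Finset.card_pos, hcard]; omega
  obtain ⟨c, hcf⟩ := hne
  have hc : c ∈ u := List.mem_toFinset.mp hcf
  set Sc := u.toFinset.erase c with hSc
  have hScard : Sc.card = n := by
    rw [hSc, Finset.card_erase_of_mem hcf, hcard]
    omega
  set g : α → Fin n := fun a =>
    if h : a ∈ Sc then Fin.cast hScard (Sc.equivFin ⟨a, h⟩) else ⟨0, hn⟩ with hg
  set f : α → Fin n ⊕ ℤ := fun a => if a = c then Sum.inr 0 else Sum.inl (g a) with hf
  set φ : Fin u.length → ℤ := fun p =>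
    ((p : ℕ) : ℤ)*((n : ℤ)+1) + (if u.get p = c then (n : ℤ) else ((g (u.get p) : ℕ) : ℤ))
    with hφ
  have hφb : ∀ p, 0 ≤ (if u.get p = c then (n : ℤ) else ((g (u.get p) : ℕ) : ℤ)) ∧
      (if u.get p = c then (n : ℤ) else ((g (u.get p) : ℕ) : ℤ)) ≤ n := by
    intro p
    split_ifs with hh
    · omega
    · have := (g (u.get p)).2
      constructor
      · positivity
      · exact_mod_cast le_of_lt this
  have hφmono : ∀ {i j : Fin u.length}, i < j → φ i < φ j := by
    intro i j hij
    have h1 : ((i : ℕ) : ℤ) + 1 ≤ ((j : ℕ) : ℤ) := by exact_mod_cast hij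
    have h2 := mul_le_mul_of_nonneg_right h1 (by positivity : (0:ℤ) ≤ (n : ℤ)+1)
    have h3 := hφb i
    have h4 := hφb j
    simp only [hφ]
    nlinarith [h2, h3.1, h3.2, h4.1, h4.2]
  refine ⟨List.ofFn φ, ?_, f, ?_, ?_⟩
  · exact List.pairwise_ofFn.mpr (fun i j hij => hφmono hij)
  · -- injectivity of f on u
    intro a ha b hb hab
    simp only [hf] at hab
    by_cases hac : a = c <;> by_cases hbc : b = c
    · rw [hac, hbc]
    · simp [hac, hbc] at hab
    · simp [hac, hbc] at hab
    · simp only [if_neg hac, if_neg hbc, Sum.inl.injEq] at hab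
      have haS : a ∈ Sc := Finset.mem_erase.mpr ⟨hac, List.mem_toFinset.mpr ha⟩
      have hbS : b ∈ Sc := Finset.mem_erase.mpr ⟨hbc, List.mem_toFinset.mpr hb⟩
      rw [hg] at hab
      simp only [dif_pos haS, dif_pos hbS] at hab
      have : Sc.equivFin ⟨a, haS⟩ = Sc.equivFin ⟨b, hbS⟩ := by
        apply Fin.ext
        have := congrArg Fin.val hab
        simpa using this
      have := Sc.equivFin.injective this
      exact congrArg Subtype.val this
  · -- map equality
    apply List.ext_getElem
    · simp
    · intro i h1 h2
      simp only [List.getElem_map]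
      have hiu : i < u.length := by simpa using h2
      have hix : i < (List.ofFn φ).length := by simpa using h1
      rw [List.getElem_ofFn]
      have hgoal : s7fun n u.length (φ ⟨i, by simpa using hix⟩) = f u[i] := by
        simp only [hφ, hf, List.get_eq_getElem, Fin.val_mk]
        by_cases hic : u[i] = c
        · rw [if_pos hic, if_pos hic, s7fun_inr]
          have hz : ((i : ℤ)) / ((u.length : ℕ) : ℤ) = 0 :=
            Int.ediv_eq_zero_of_lt (by positivity) (by exact_mod_cast hiu)
          rw [hz]
        · rw [if_neg hic, if_neg hic]
          have hglt : ((g u[i] : ℕ) : ℤ) < (n : ℤ) := by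
            exact_mod_cast (g u[i]).2
          rw [s7fun_inl n u.length _ _ (by positivity) hglt]
          congr 1
      exact hgoal
section
variable {α : Type*} [DecidableEq α]

/-- Generic transfer of a copy of `u` from one doubly infinite sequence to another:
the "middle window" `[A₁, A₂]` is transported by a monotone index map `ψ` (which matches
values up to a relabeling fixing `inl`-letters), while the used positions outside the
window (which carry `inl` letters only) are re-embedded greedily. -/
lemma s7_transfer {n : ℕ} {h₁ h₂ : ℤ → Fin n ⊕ ℤ} {u : List α} {ix : List ℤ}
    {f f' : α → Fin n ⊕ ℤ}
    (hsort : ix.Pairwise (· < ·)) (hmap : ix.map h₁ = u.map f)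
    (hinj' : ∀ x ∈ u, ∀ y ∈ u, f' x = f' y → x = y)
    (relabel : (Fin n ⊕ ℤ) → (Fin n ⊕ ℤ))
    (hrel_inl : ∀ t : Fin n, relabel (Sum.inl t) = Sum.inl t)
    (hf' : ∀ a ∈ u, f' a = relabel (f a))
    (A₁ A₂ : ℤ) (ψ : ℤ → ℤ)
    (hψmono : ∀ p q : ℤ, A₁ ≤ p → p < q → q ≤ A₂ → ψ p < ψ q)
    (hψval : ∀ p ∈ ix, A₁ ≤ p → p ≤ A₂ → h₂ (ψ p) = relabel (h₁ p))
    (hleft : ∀ p ∈ ix, p < A₁ → ∃ t, h₁ p = Sum.inl t)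
    (hright : ∀ p ∈ ix, A₂ < p → ∃ t, h₁ p = Sum.inl t)
    (avail_lt : ∀ (t : Fin n) (B : ℤ), ∃ p, p < B ∧ h₂ p = Sum.inl t)
    (avail_gt : ∀ (t : Fin n) (B : ℤ), ∃ p, B < p ∧ h₂ p = Sum.inl t)
    (BL BR : ℤ) (hBLR : BL ≤ BR)
    (hBL : ∀ p : ℤ, A₁ ≤ p → p ≤ A₂ → BL ≤ ψ p)
    (hBR : ∀ p : ℤ, A₁ ≤ p → p ≤ A₂ → ψ p < BR) :
    ContainsCopyZ h₂ u := by
  obtain ⟨L₁, R, he1, hb1, hb2⟩ := s7_sorted_split hsort A₁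
  have hsortR : R.Pairwise (· < ·) := by
    rw [he1] at hsort
    exact (List.pairwise_append.mp hsort).2.1
  obtain ⟨L₂, L₃, he2, hb3, hb4⟩ := s7_sorted_split hsortR (A₂+1)
  have heix : ix = L₁ ++ L₂ ++ L₃ := by rw [he1, he2, List.append_assoc]
  have hmemL₁ : ∀ p ∈ L₁, p ∈ ix := fun p hp => by rw [heix]; simp [hp]
  have hmemL₂ : ∀ p ∈ L₂, p ∈ ix := fun p hp => by rw [heix]; simp [hp]
  have hmemL₃ : ∀ p ∈ L₃, p ∈ ix := fun p hp => by rw [heix]; simp [hp]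
  have hL₂lb : ∀ p ∈ L₂, A₁ ≤ p := fun p hp => hb2 p (by rw [he2]; simp [hp])
  have hL₂ub : ∀ p ∈ L₂, p ≤ A₂ := fun p hp => by have := hb3 p hp; omega
  have hL₃lb : ∀ p ∈ L₃, A₂ < p := fun p hp => by have := hb4 p hp; omega
  -- decompose the word
  have hw : u.map f = L₁.map h₁ ++ L₂.map h₁ ++ L₃.map h₁ := by
    rw [← hmap, heix]; simp
  -- the pieces outside the window consist of inl letters
  obtain ⟨v₁, hv₁⟩ := s7_all_inl (w := L₁.map h₁) (by
    intro y hy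
    obtain ⟨p, hp, rfl⟩ := List.mem_map.mp hy
    exact hleft p (hmemL₁ p hp) (hb1 p hp))
  obtain ⟨v₃, hv₃⟩ := s7_all_inl (w := L₃.map h₁) (by
    intro y hy
    obtain ⟨p, hp, rfl⟩ := List.mem_map.mp hy
    exact hright p (hmemL₃ p hp) (hL₃lb p hp))
  obtain ⟨G₁, hG₁s, hG₁b, hG₁m⟩ := s7_greedy_lt h₂ avail_lt v₁ BL
  obtain ⟨G₃, hG₃s, hG₃b, hG₃m⟩ := s7_greedy_gt h₂ avail_gt v₃ BR
  set M₂ := L₂.map ψ with hM₂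
  have hsortL₂ : L₂.Pairwise (· < ·) := by
    rw [he2] at hsortR
    exact (List.pairwise_append.mp hsortR).1
  have hM₂s : M₂.Pairwise (· < ·) := by
    rw [hM₂, List.pairwise_map]
    have h2 := List.Pairwise.and_mem.mp hsortL₂
    exact h2.imp (fun {a b} hab =>
      hψmono a b (hL₂lb a hab.1) hab.2.2 (hL₂ub b hab.2.1))
  have hM₂lb : ∀ q ∈ M₂, BL ≤ q := by
    intro q hq
    obtain ⟨p, hp, rfl⟩ := List.mem_map.mp hq
    exact hBL p (hL₂lb p hp) (hL₂ub p hp)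
  have hM₂ub : ∀ q ∈ M₂, q < BR := by
    intro q hq
    obtain ⟨p, hp, rfl⟩ := List.mem_map.mp hq
    exact hBR p (hL₂lb p hp) (hL₂ub p hp)
  refine ⟨G₁ ++ M₂ ++ G₃, ?_, f', hinj', ?_⟩
  · refine List.pairwise_append.mpr ⟨List.pairwise_append.mpr ⟨hG₁s, hM₂s, ?_⟩, hG₃s, ?_⟩
    · intro a ha b hb
      exact lt_of_lt_of_le (hG₁b a ha) (hM₂lb b hb)
    · intro a ha b hb
      rcases List.mem_append.mp ha with ha | ha
      · exact lt_trans (lt_of_lt_of_le (hG₁b a ha) hBLR) (hG₃b b hb)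
      · exact lt_trans (hM₂ub a ha) (hG₃b b hb)
  · have htarget : u.map f' = (u.map f).map relabel := by
      rw [List.map_map]
      exact List.map_congr_left hf'
    rw [htarget, hw]
    simp only [List.map_append]
    congr 1
    · congr 1
      · -- G₁ piece
        rw [hG₁m, hv₁, List.map_map]
        apply List.map_congr_left
        intro t _
        exact (hrel_inl t).symm
      · -- middle piece
        rw [hM₂, List.map_map, List.map_map]
        apply List.map_congr_left
        intro p hp
        exact hψval p (hmemL₂ p hp) (hL₂lb p hp) (hL₂ub p hp)
    · -- G₃ piece
      rw [hG₃m, hv₃, List.map_map]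
      apply List.map_congr_left
      intro t _
      exact (hrel_inl t).symm
end
section
variable {α : Type*} [DecidableEq α]

/-- decomposition of an integer position -/
lemma s7_pos_decomp (n : ℕ) (p : ℤ) :
    ∃ q t : ℤ, 0 ≤ t ∧ t ≤ (n : ℤ) ∧ p = q*((n : ℤ)+1)+t := by
  refine ⟨p / ((n : ℤ)+1), p % ((n : ℤ)+1), s7_emod_nonneg n p, ?_, ?_⟩
  · have := s7_emod_lt n p
    omega
  · have h := Int.mul_ediv_add_emod p ((n : ℤ)+1)
    linarith

/-- Any used position whose value is an `inr` lies in the cluster of `k₀`. -/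
lemma s7_used_inr_range {n N : ℕ} (hN : 0 < N) {u : List α} {ix : List ℤ}
    {f : α → Fin n ⊕ ℤ} {c : α} {k₀ : ℤ}
    (hmap : ix.map (s7fun n N) = u.map f)
    (hck : f c = Sum.inr k₀)
    (hstruct : ∀ a ∈ u, a ≠ c → ∃ t, f a = Sum.inl t)
    {p : ℤ} (hp : p ∈ ix) {k'' : ℤ} (hval : s7fun n N p = Sum.inr k'') :
    k'' = k₀ ∧ (k₀*(N : ℤ))*((n : ℤ)+1)+(n : ℤ) ≤ p ∧
      p ≤ (k₀*(N : ℤ)+(N : ℤ)-1)*((n : ℤ)+1)+(n : ℤ) := by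
  have hmem : Sum.inr k'' ∈ u.map f := by
    rw [← hmap, ← hval]
    exact List.mem_map_of_mem hp
  obtain ⟨a, ha, hfa⟩ := List.mem_map.mp hmem
  have hak : k'' = k₀ := by
    by_cases hac : a = c
    · rw [hac, hck] at hfa
      simpa using hfa.symm
    · obtain ⟨t, ht⟩ := hstruct a ha hac
      rw [ht] at hfa
      simp at hfa
  subst hak
  obtain ⟨j, hj0, hjN, rfl⟩ := (s7fun_eq_inr_iff hN).mp hval
  have e1 : (k''*(N : ℤ)+j)*((n : ℤ)+1) = (k''*(N : ℤ))*((n : ℤ)+1) + j*((n : ℤ)+1) := by ring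
  have e2 : (k''*(N : ℤ)+(N : ℤ)-1)*((n : ℤ)+1) =
      (k''*(N : ℤ))*((n : ℤ)+1) + ((N : ℤ)-1)*((n : ℤ)+1) := by ring
  have h3 : 0 ≤ j*((n : ℤ)+1) := by positivity
  have h4 : j*((n : ℤ)+1) ≤ ((N : ℤ)-1)*((n : ℤ)+1) :=
    mul_le_mul_of_nonneg_right (by omega) (by positivity)
  refine ⟨rfl, by linarith, by linarith⟩

/-- value matching for the "drop the last cluster slot" shift. -/
lemma s7_window_val_last {n N : ℕ} (hN : 0 < N) (k₀ : ℤ) {p : ℤ}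
    (hp1 : (k₀*((N : ℤ)+1))*((n : ℤ)+1) ≤ p)
    (hp2 : p ≤ (k₀*((N : ℤ)+1)+(N : ℤ))*((n : ℤ)+1)+(n : ℤ)-1) :
    s7fun n N (p - k₀*((n : ℤ)+1)) = s7fun n (N+1) p := by
  obtain ⟨q, t, ht0, htn, rfl⟩ := s7_pos_decomp n p
  have hq1 : k₀*((N : ℤ)+1) ≤ q := by
    by_contra hq
    push_neg at hq
    have : q*((n : ℤ)+1) ≤ (k₀*((N : ℤ)+1)-1)*((n : ℤ)+1) :=
      mul_le_mul_of_nonneg_right (by omega) (by positivity)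
    have e : (k₀*((N : ℤ)+1)-1)*((n : ℤ)+1) = (k₀*((N : ℤ)+1))*((n : ℤ)+1) - ((n : ℤ)+1) := by
      ring
    linarith
  have hshift : q*((n : ℤ)+1)+t - k₀*((n : ℤ)+1) = (q-k₀)*((n : ℤ)+1)+t := by ring
  rw [hshift]
  rcases lt_or_eq_of_le htn with htlt | hteq
  · rw [s7fun_inl n N _ _ ht0 (by exact_mod_cast htlt),
      s7fun_inl n (N+1) _ _ ht0 (by exact_mod_cast htlt)]
  · subst hteq
    have hq2 : q ≤ k₀*((N : ℤ)+1)+(N : ℤ)-1 := by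
      by_contra hq
      push_neg at hq
      have : (k₀*((N : ℤ)+1)+(N : ℤ))*((n : ℤ)+1) ≤ q*((n : ℤ)+1) :=
        mul_le_mul_of_nonneg_right (by omega) (by positivity)
      linarith
    rw [s7fun_inr, s7fun_inr]
    congr 1
    have e1 : q / ((N : ℤ)+1) = k₀ := by
      rw [show ((N : ℤ)+1) = (((N+1 : ℕ)) : ℤ) by push_cast; ring]
      rw [s7_ediv_eq_iff (by omega)]
      push_cast
      constructor <;> nlinarith
    have e2 : (q-k₀) / (N : ℤ) = k₀ := by
      rw [s7_ediv_eq_iff hN]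
      constructor <;> nlinarith
    push_cast
    rw [e1, e2]

/-- value matching for the "drop the first cluster slot" shift. -/
lemma s7_window_val_first {n N : ℕ} (hN : 0 < N) (k₀ : ℤ) {p : ℤ}
    (hp1 : (k₀*((N : ℤ)+1))*((n : ℤ)+1)+(n : ℤ)+1 ≤ p)
    (hp2 : p ≤ (k₀*((N : ℤ)+1)+(N : ℤ))*((n : ℤ)+1)+(n : ℤ)) :
    s7fun n N (p - (k₀+1)*((n : ℤ)+1)) = s7fun n (N+1) p := by
  obtain ⟨q, t, ht0, htn, rfl⟩ := s7_pos_decomp n p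
  have hq1 : k₀*((N : ℤ)+1)+1 ≤ q := by
    by_contra hq
    push_neg at hq
    have : q*((n : ℤ)+1) ≤ (k₀*((N : ℤ)+1))*((n : ℤ)+1) :=
      mul_le_mul_of_nonneg_right (by omega) (by positivity)
    linarith
  have hq2 : q ≤ k₀*((N : ℤ)+1)+(N : ℤ) := by
    by_contra hq
    push_neg at hq
    have : (k₀*((N : ℤ)+1)+(N : ℤ)+1)*((n : ℤ)+1) ≤ q*((n : ℤ)+1) :=
      mul_le_mul_of_nonneg_right (by omega) (by positivity)
    have e : (k₀*((N : ℤ)+1)+(N : ℤ)+1)*((n : ℤ)+1) =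
      (k₀*((N : ℤ)+1)+(N : ℤ))*((n : ℤ)+1) + ((n : ℤ)+1) := by ring
    linarith
  have hshift : q*((n : ℤ)+1)+t - (k₀+1)*((n : ℤ)+1) = (q-k₀-1)*((n : ℤ)+1)+t := by ring
  rw [hshift]
  rcases lt_or_eq_of_le htn with htlt | hteq
  · rw [s7fun_inl n N _ _ ht0 (by exact_mod_cast htlt),
      s7fun_inl n (N+1) _ _ ht0 (by exact_mod_cast htlt)]
  · subst hteq
    rw [s7fun_inr, s7fun_inr]
    congr 1
    have e1 : q / ((N : ℤ)+1) = k₀ := by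
      rw [show ((N : ℤ)+1) = (((N+1 : ℕ)) : ℤ) by push_cast; ring]
      rw [s7_ediv_eq_iff (by omega)]
      push_cast
      constructor <;> nlinarith
    have e2 : (q-k₀-1) / (N : ℤ) = k₀ := by
      rw [s7_ediv_eq_iff hN]
      constructor <;> nlinarith
    push_cast
    rw [e1, e2]
end
section
variable {α : Type*} [DecidableEq α]

lemma s7_insertZ_le {A : Type*} (s : ℤ → A) (m : ℤ) (x : A) {y : ℤ} (h : y ≤ m) :
    insertZ s m x y = s y := by
  unfold insertZ
  rw [if_pos h]

lemma s7_insertZ_self {A : Type*} (s : ℤ → A) (m : ℤ) (x : A) :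
    insertZ s m x (m+1) = x := by
  unfold insertZ
  rw [if_neg (by omega), if_pos rfl]

lemma s7_insertZ_ge {A : Type*} (s : ℤ → A) (m : ℤ) (x : A) {y : ℤ} (h : m+2 ≤ y) :
    insertZ s m x y = s (y-1) := by
  unfold insertZ
  rw [if_neg (by omega), if_neg (by omega)]

lemma s7_insert_avail_lt (n N : ℕ) (m : ℤ) (x : Fin n ⊕ ℤ) (t : Fin n) (B : ℤ) :
    ∃ p, p < B ∧ insertZ (s7fun n N) m x p = Sum.inl t := by
  obtain ⟨p, hp, hv⟩ := s7_exists_inl_lt n N t (min B (m+1))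
  refine ⟨p, lt_of_lt_of_le hp (min_le_left _ _), ?_⟩
  rw [s7_insertZ_le _ _ _ (by have := min_le_right B (m+1); omega)]
  exact hv

lemma s7_insert_avail_gt (n N : ℕ) (m : ℤ) (x : Fin n ⊕ ℤ) (t : Fin n) (B : ℤ) :
    ∃ p, B < p ∧ insertZ (s7fun n N) m x p = Sum.inl t := by
  obtain ⟨p, hp, hv⟩ := s7_exists_inl_gt n N t (max B (m+1))
  refine ⟨p+1, by have := le_max_left B (m+1); omega, ?_⟩
  rw [s7_insertZ_ge _ _ _ (by have := le_max_right B (m+1); omega)]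
  simpa using hv

/-- value matching for transplanting the initial part of an `(N+1)`-cluster onto an
`N`-cluster of label `k`. -/
lemma s7_window_right {n N : ℕ} (hN : 0 < N) (k₀ k : ℤ) {p : ℤ}
    (hp1 : (k₀*((N : ℤ)+1))*((n : ℤ)+1) ≤ p)
    (hp2 : p ≤ (k₀*((N : ℤ)+1)+(N : ℤ))*((n : ℤ)+1)+(n : ℤ)-1) :
    s7fun n N (p + (k*(N : ℤ) - k₀*((N : ℤ)+1))*((n : ℤ)+1)) =
      (if s7fun n (N+1) p = Sum.inr k₀ then Sum.inr k else s7fun n (N+1) p) := by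
  obtain ⟨q, t, ht0, htn, rfl⟩ := s7_pos_decomp n p
  have hq1 : k₀*((N : ℤ)+1) ≤ q := by
    by_contra hq
    push_neg at hq
    have : q*((n : ℤ)+1) ≤ (k₀*((N : ℤ)+1)-1)*((n : ℤ)+1) :=
      mul_le_mul_of_nonneg_right (by omega) (by positivity)
    have e : (k₀*((N : ℤ)+1)-1)*((n : ℤ)+1) = (k₀*((N : ℤ)+1))*((n : ℤ)+1) - ((n : ℤ)+1) := by
      ring
    linarith
  have hshift : q*((n : ℤ)+1)+t + (k*(N : ℤ) - k₀*((N : ℤ)+1))*((n : ℤ)+1)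
      = (q + k*(N : ℤ) - k₀*((N : ℤ)+1))*((n : ℤ)+1)+t := by ring
  rw [hshift]
  rcases lt_or_eq_of_le htn with htlt | hteq
  · rw [s7fun_inl n N _ _ ht0 (by exact_mod_cast htlt),
      s7fun_inl n (N+1) _ _ ht0 (by exact_mod_cast htlt)]
    simp
  · subst hteq
    have hq2 : q ≤ k₀*((N : ℤ)+1)+(N : ℤ)-1 := by
      by_contra hq
      push_neg at hq
      have : (k₀*((N : ℤ)+1)+(N : ℤ))*((n : ℤ)+1) ≤ q*((n : ℤ)+1) :=
        mul_le_mul_of_nonneg_right (by omega) (by positivity)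
      linarith
    rw [s7fun_inr, s7fun_inr]
    have e1 : q / (((N+1 : ℕ)) : ℤ) = k₀ := by
      rw [s7_ediv_eq_iff (by omega)]
      push_cast
      constructor <;> nlinarith
    have e2 : (q + k*(N : ℤ) - k₀*((N : ℤ)+1)) / (N : ℤ) = k := by
      rw [s7_ediv_eq_iff hN]
      constructor <;> nlinarith
    rw [e2, e1, if_pos rfl]

/-- value matching for transplanting the final part of an `(N+1)`-cluster onto an
`N`-cluster of label `k`. -/
lemma s7_window_left {n N : ℕ} (hN : 0 < N) (k₀ k : ℤ) {p : ℤ}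
    (hp1 : (k₀*((N : ℤ)+1))*((n : ℤ)+1)+(n : ℤ)+1 ≤ p)
    (hp2 : p ≤ (k₀*((N : ℤ)+1)+(N : ℤ))*((n : ℤ)+1)+(n : ℤ)) :
    s7fun n N (p + (k*(N : ℤ) - k₀*((N : ℤ)+1) - 1)*((n : ℤ)+1)) =
      (if s7fun n (N+1) p = Sum.inr k₀ then Sum.inr k else s7fun n (N+1) p) := by
  obtain ⟨q, t, ht0, htn, rfl⟩ := s7_pos_decomp n p
  have hq1 : k₀*((N : ℤ)+1)+1 ≤ q := by
    by_contra hq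
    push_neg at hq
    have : q*((n : ℤ)+1) ≤ (k₀*((N : ℤ)+1))*((n : ℤ)+1) :=
      mul_le_mul_of_nonneg_right (by omega) (by positivity)
    linarith
  have hq2 : q ≤ k₀*((N : ℤ)+1)+(N : ℤ) := by
    by_contra hq
    push_neg at hq
    have : (k₀*((N : ℤ)+1)+(N : ℤ)+1)*((n : ℤ)+1) ≤ q*((n : ℤ)+1) :=
      mul_le_mul_of_nonneg_right (by omega) (by positivity)
    have e : (k₀*((N : ℤ)+1)+(N : ℤ)+1)*((n : ℤ)+1) =
      (k₀*((N : ℤ)+1)+(N : ℤ))*((n : ℤ)+1) + ((n : ℤ)+1) := by ring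
    linarith
  have hshift : q*((n : ℤ)+1)+t + (k*(N : ℤ) - k₀*((N : ℤ)+1) - 1)*((n : ℤ)+1)
      = (q + k*(N : ℤ) - k₀*((N : ℤ)+1) - 1)*((n : ℤ)+1)+t := by ring
  rw [hshift]
  rcases lt_or_eq_of_le htn with htlt | hteq
  · rw [s7fun_inl n N _ _ ht0 (by exact_mod_cast htlt),
      s7fun_inl n (N+1) _ _ ht0 (by exact_mod_cast htlt)]
    simp
  · subst hteq
    rw [s7fun_inr, s7fun_inr]
    have e1 : q / (((N+1 : ℕ)) : ℤ) = k₀ := by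
      rw [s7_ediv_eq_iff (by omega)]
      push_cast
      constructor <;> nlinarith
    have e2 : (q + k*(N : ℤ) - k₀*((N : ℤ)+1) - 1) / (N : ℤ) = k := by
      rw [s7_ediv_eq_iff hN]
      constructor <;> nlinarith
    rw [e2, e1, if_pos rfl]
end
section
variable {α : Type*} [DecidableEq α]

/-- Inserting the letter `inr k` far to the right of cluster `k` creates a copy of `u`. -/
lemma s7_sat_right {n N : ℕ} (hn : 0 < n) (hN : 0 < N) {u : List α}
    (hcard : u.toFinset.card = n+1) (hsi : StronglyIrreducibleSeq u)
    (hcontain : ContainsCopyZ (s7fun n (N+1)) u) (k m : ℤ)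
    (hfar : (k*(N : ℤ)+(N : ℤ)-1)*((n : ℤ)+1)+(n : ℤ)+(n : ℤ) ≤ m) :
    ContainsCopyZ (insertZ (s7fun n N) m (Sum.inr k)) u := by
  obtain ⟨ix, hsort, f, hinj, hmap⟩ := hcontain
  obtain ⟨c, k₀, hc, hck, hstruct⟩ := s7_copy_structure hn hcard hsi
    (fun hkk hp hp' => s7_cluster_mono (by omega) hkk hp hp') hsort hinj hmap
  have hrange : ∀ p ∈ ix, ∀ k'' : ℤ, s7fun n (N+1) p = Sum.inr k'' →
      k'' = k₀ ∧ (k₀*((N : ℤ)+1))*((n : ℤ)+1)+(n : ℤ) ≤ p ∧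
        p ≤ (k₀*((N : ℤ)+1)+(N : ℤ))*((n : ℤ)+1)+(n : ℤ) := by
    intro p hp k'' hval
    have h := s7_used_inr_range (by omega : 0 < N+1) hmap hck hstruct hp hval
    push_cast at h
    refine ⟨h.1, by linarith [h.2.1], by linarith [h.2.2]⟩
  -- abbreviations (as plain equations)
  have eA2δ : ((k₀*((N : ℤ)+1)+(N : ℤ))*((n : ℤ)+1)+(n : ℤ)) +
      (k*(N : ℤ) - k₀*((N : ℤ)+1))*((n : ℤ)+1)
      = ((k*(N : ℤ)+(N : ℤ)-1)*((n : ℤ)+1)+(n : ℤ)) + ((n : ℤ)+1) := by ring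
  have hkey : ((k₀*((N : ℤ)+1)+(N : ℤ))*((n : ℤ)+1)+(n : ℤ)) +
      (k*(N : ℤ) - k₀*((N : ℤ)+1))*((n : ℤ)+1) ≤ m + 1 := by omega
  have hA12 : (k₀*((N : ℤ)+1))*((n : ℤ)+1) ≤
      (k₀*((N : ℤ)+1)+(N : ℤ))*((n : ℤ)+1)+(n : ℤ) := by
    have e : (k₀*((N : ℤ)+1)+(N : ℤ))*((n : ℤ)+1)+(n : ℤ) =
      (k₀*((N : ℤ)+1))*((n : ℤ)+1) + (N : ℤ)*((n : ℤ)+1) + (n : ℤ) := by ring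
    have h1 : (0 : ℤ) ≤ (N : ℤ)*((n : ℤ)+1) := by positivity
    omega
  refine s7_transfer (f' := fun a => if f a = Sum.inr k₀ then Sum.inr k else f a)
    hsort hmap ?_
    (fun v => if v = Sum.inr k₀ then Sum.inr k else v)
    (fun t => if_neg (by simp)) (fun a _ => rfl)
    ((k₀*((N : ℤ)+1))*((n : ℤ)+1)) ((k₀*((N : ℤ)+1)+(N : ℤ))*((n : ℤ)+1)+(n : ℤ))
    (fun p => if p = (k₀*((N : ℤ)+1)+(N : ℤ))*((n : ℤ)+1)+(n : ℤ) then m+1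
      else p + (k*(N : ℤ) - k₀*((N : ℤ)+1))*((n : ℤ)+1))
    ?_ ?_ ?_ ?_
    (s7_insert_avail_lt n N m _) (s7_insert_avail_gt n N m _)
    ((k₀*((N : ℤ)+1))*((n : ℤ)+1) + (k*(N : ℤ) - k₀*((N : ℤ)+1))*((n : ℤ)+1))
    (m+2) ?_ ?_ ?_
  · -- injectivity of the relabeled f
    intro x hx y hy hxy
    by_cases hxc : x = c <;> by_cases hyc : y = c
    · rw [hxc, hyc]
    · exfalso
      obtain ⟨t, ht⟩ := hstruct y hy hyc
      rw [hxc, hck, if_pos rfl, ht, if_neg (by simp)] at hxy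
      simp at hxy
    · exfalso
      obtain ⟨t, ht⟩ := hstruct x hx hxc
      rw [hyc, hck, if_pos rfl, ht, if_neg (by simp)] at hxy
      simp at hxy
    · obtain ⟨t, ht⟩ := hstruct x hx hxc
      obtain ⟨t', ht'⟩ := hstruct y hy hyc
      rw [ht, if_neg (by simp), ht', if_neg (by simp)] at hxy
      exact hinj x hx y hy (by rw [ht, ht', hxy])
  · -- monotonicity of ψ
    intro p q h1 h2 h3
    split_ifs with hp hq hq
    · omega
    · omega
    · omega
    · omega
  · -- value matching
    intro p hp h1 h2
    by_cases hpA : p = (k₀*((N : ℤ)+1)+(N : ℤ))*((n : ℤ)+1)+(n : ℤ)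
    · rw [if_pos hpA, s7_insertZ_self, hpA, s7fun_inr]
      have ecast : ((N : ℤ)+1) = (((N+1 : ℕ)) : ℤ) := by push_cast; ring
      have e1 : (k₀*((N : ℤ)+1)+(N : ℤ)) / (((N+1 : ℕ)) : ℤ) = k₀ := by
        rw [s7_ediv_eq_iff (by omega)]
        push_cast
        constructor <;> nlinarith
      rw [e1, if_pos rfl]
    · rw [if_neg hpA, s7_insertZ_le _ _ _ (by omega)]
      exact s7_window_right hN k₀ k h1 (by omega)
  · -- left of window: inl values
    intro p hp hplt
    rcases hval : s7fun n (N+1) p with t | k''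
    · exact ⟨t, rfl⟩
    · exfalso
      obtain ⟨-, hge, -⟩ := hrange p hp k'' hval
      linarith
  · -- right of window: inl values
    intro p hp hpgt
    rcases hval : s7fun n (N+1) p with t | k''
    · exact ⟨t, rfl⟩
    · exfalso
      obtain ⟨-, -, hle⟩ := hrange p hp k'' hval
      linarith
  · -- BL ≤ BR
    omega
  · -- BL bound
    intro p h1 h2
    split_ifs with hp
    · omega
    · omega
  · -- BR bound
    intro p h1 h2
    split_ifs with hp
    · omega
    · omega

/-- Inserting the letter `inr k` far to the left of cluster `k` creates a copy of `u`. -/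
lemma s7_sat_left {n N : ℕ} (hn : 0 < n) (hN : 0 < N) {u : List α}
    (hcard : u.toFinset.card = n+1) (hsi : StronglyIrreducibleSeq u)
    (hcontain : ContainsCopyZ (s7fun n (N+1)) u) (k m : ℤ)
    (hfar : m + (n : ℤ) + 1 ≤ (k*(N : ℤ))*((n : ℤ)+1)+(n : ℤ)) :
    ContainsCopyZ (insertZ (s7fun n N) m (Sum.inr k)) u := by
  obtain ⟨ix, hsort, f, hinj, hmap⟩ := hcontain
  obtain ⟨c, k₀, hc, hck, hstruct⟩ := s7_copy_structure hn hcard hsi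
    (fun hkk hp hp' => s7_cluster_mono (by omega) hkk hp hp') hsort hinj hmap
  have hrange : ∀ p ∈ ix, ∀ k'' : ℤ, s7fun n (N+1) p = Sum.inr k'' →
      k'' = k₀ ∧ (k₀*((N : ℤ)+1))*((n : ℤ)+1)+(n : ℤ) ≤ p ∧
        p ≤ (k₀*((N : ℤ)+1)+(N : ℤ))*((n : ℤ)+1)+(n : ℤ) := by
    intro p hp k'' hval
    have h := s7_used_inr_range (by omega : 0 < N+1) hmap hck hstruct hp hval
    push_cast at h
    refine ⟨h.1, by linarith [h.2.1], by linarith [h.2.2]⟩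
  have eA1δ : ((k₀*((N : ℤ)+1))*((n : ℤ)+1)+(n : ℤ)) +
      ((k*(N : ℤ) - k₀*((N : ℤ)+1) - 1)*((n : ℤ)+1) + 1)
      = (k*(N : ℤ))*((n : ℤ)+1) := by ring
  have hkey : m + 2 ≤ ((k₀*((N : ℤ)+1))*((n : ℤ)+1)+(n : ℤ)) +
      ((k*(N : ℤ) - k₀*((N : ℤ)+1) - 1)*((n : ℤ)+1) + 1) + 1 := by omega
  have hA12 : (k₀*((N : ℤ)+1))*((n : ℤ)+1)+(n : ℤ) ≤
      (k₀*((N : ℤ)+1)+(N : ℤ))*((n : ℤ)+1)+(n : ℤ) := by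
    have e : (k₀*((N : ℤ)+1)+(N : ℤ))*((n : ℤ)+1)+(n : ℤ) =
      (k₀*((N : ℤ)+1))*((n : ℤ)+1) + (N : ℤ)*((n : ℤ)+1) + (n : ℤ) := by ring
    have h1 : (0 : ℤ) ≤ (N : ℤ)*((n : ℤ)+1) := by positivity
    omega
  refine s7_transfer (f' := fun a => if f a = Sum.inr k₀ then Sum.inr k else f a)
    hsort hmap ?_
    (fun v => if v = Sum.inr k₀ then Sum.inr k else v)
    (fun t => if_neg (by simp)) (fun a _ => rfl)
    ((k₀*((N : ℤ)+1))*((n : ℤ)+1)+(n : ℤ)) ((k₀*((N : ℤ)+1)+(N : ℤ))*((n : ℤ)+1)+(n : ℤ))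
    (fun p => if p = (k₀*((N : ℤ)+1))*((n : ℤ)+1)+(n : ℤ) then m+1
      else p + ((k*(N : ℤ) - k₀*((N : ℤ)+1) - 1)*((n : ℤ)+1) + 1))
    ?_ ?_ ?_ ?_
    (s7_insert_avail_lt n N m _) (s7_insert_avail_gt n N m _)
    (m+1)
    (((k₀*((N : ℤ)+1)+(N : ℤ))*((n : ℤ)+1)+(n : ℤ)) +
      ((k*(N : ℤ) - k₀*((N : ℤ)+1) - 1)*((n : ℤ)+1) + 1) + 1) ?_ ?_ ?_
  · intro x hx y hy hxy
    by_cases hxc : x = c <;> by_cases hyc : y = c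
    · rw [hxc, hyc]
    · exfalso
      obtain ⟨t, ht⟩ := hstruct y hy hyc
      rw [hxc, hck, if_pos rfl, ht, if_neg (by simp)] at hxy
      simp at hxy
    · exfalso
      obtain ⟨t, ht⟩ := hstruct x hx hxc
      rw [hyc, hck, if_pos rfl, ht, if_neg (by simp)] at hxy
      simp at hxy
    · obtain ⟨t, ht⟩ := hstruct x hx hxc
      obtain ⟨t', ht'⟩ := hstruct y hy hyc
      rw [ht, if_neg (by simp), ht', if_neg (by simp)] at hxy
      exact hinj x hx y hy (by rw [ht, ht', hxy])
  · intro p q h1 h2 h3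
    split_ifs with hp hq hq
    · omega
    · omega
    · omega
    · omega
  · intro p hp h1 h2
    by_cases hpA : p = (k₀*((N : ℤ)+1))*((n : ℤ)+1)+(n : ℤ)
    · rw [if_pos hpA, s7_insertZ_self, hpA, s7fun_inr]
      have ecast : ((N : ℤ)+1) = (((N+1 : ℕ)) : ℤ) := by push_cast; ring
      have e1 : (k₀*((N : ℤ)+1)) / (((N+1 : ℕ)) : ℤ) = k₀ := by
        rw [s7_ediv_eq_iff (by omega)]
        push_cast
        constructor <;> nlinarith
      rw [e1, if_pos rfl]
    · rw [if_neg hpA, s7_insertZ_ge _ _ _ (by omega)]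
      have e2 : p + ((k*(N : ℤ) - k₀*((N : ℤ)+1) - 1)*((n : ℤ)+1) + 1) - 1
          = p + (k*(N : ℤ) - k₀*((N : ℤ)+1) - 1)*((n : ℤ)+1) := by ring
      rw [e2]
      exact s7_window_left hN k₀ k (by omega) h2
  · intro p hp hplt
    rcases hval : s7fun n (N+1) p with t | k''
    · exact ⟨t, rfl⟩
    · exfalso
      obtain ⟨-, hge, -⟩ := hrange p hp k'' hval
      linarith
  · intro p hp hpgt
    rcases hval : s7fun n (N+1) p with t | k''
    · exact ⟨t, rfl⟩
    · exfalso
      obtain ⟨-, -, hle⟩ := hrange p hp k'' hval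
      linarith
  · omega
  · intro p h1 h2
    split_ifs with hp
    · omega
    · omega
  · intro p h1 h2
    split_ifs with hp
    · omega
    · omega
end
section
variable {α : Type*} [DecidableEq α]

/-- Inserting an `inl` letter anywhere violates sparsity. -/
lemma s7_insert_inl_unsparse {n N : ℕ} (hn : 0 < n) (t : Fin n) (m : ℤ) :
    ¬ SparseZ (n+1) (insertZ (s7fun n N) m (Sum.inl t)) := by
  intro hsp
  set q := (m+1-(t : ℤ)) / ((n : ℤ)+1) with hq
  set e := (m+1-(t : ℤ)) % ((n : ℤ)+1) with he
  have hqe : m+1-(t : ℤ) = ((n : ℤ)+1)*q + e := (Int.mul_ediv_add_emod _ _).symm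
  have he0 : 0 ≤ e := Int.emod_nonneg _ (by positivity)
  have hen : e < (n : ℤ)+1 := Int.emod_lt_of_pos _ (by positivity)
  have hval : s7fun n N (q*((n : ℤ)+1)+(t : ℤ)) = Sum.inl t := by
    rw [s7fun_inl n N q (t : ℤ) (by positivity) (by exact_mod_cast t.2)]
    exact congrArg Sum.inl (Fin.ext (by simp))
  have hp₀ : q*((n : ℤ)+1)+(t : ℤ) = m+1-e := by linarith
  by_cases hcase : e = 0
  · have h1 := hsp (m+1) (m+2) (by omega) (by push_cast; omega)
    apply h1
    rw [s7_insertZ_self, s7_insertZ_ge _ _ _ (by omega)]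
    have h2 : m+2-1 = q*((n : ℤ)+1)+(t : ℤ) := by omega
    rw [h2, hval]
  · have hple : q*((n : ℤ)+1)+(t : ℤ) ≤ m := by omega
    have h1 := hsp (q*((n : ℤ)+1)+(t : ℤ)) (m+1) (by omega) (by push_cast; omega)
    apply h1
    rw [s7_insertZ_le _ _ _ hple, s7_insertZ_self, hval]

/-- Inserting `inr k` near its own cluster violates sparsity. -/
lemma s7_insert_inr_unsparse {n N : ℕ} (hn : 0 < n) (hN : 0 < N) (k m : ℤ)
    (hnr : ¬ ((k*(N : ℤ)+(N : ℤ)-1)*((n : ℤ)+1)+(n : ℤ)+(n : ℤ) ≤ m))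
    (hnl : ¬ (m + (n : ℤ) + 1 ≤ (k*(N : ℤ))*((n : ℤ)+1)+(n : ℤ))) :
    ¬ SparseZ (n+1) (insertZ (s7fun n N) m (Sum.inr k)) := by
  push_neg at hnr hnl
  -- find a cluster position o with m - n < o < m + n + 1
  obtain ⟨o, j, hj0, hjN, hoeq, holb, houb⟩ :
      ∃ o j : ℤ, 0 ≤ j ∧ j < (N : ℤ) ∧ o = (k*(N : ℤ)+j)*((n : ℤ)+1)+(n : ℤ) ∧
        m - (n : ℤ) < o ∧ o < m + (n : ℤ) + 1 := by
    by_cases hc1 : m - (n : ℤ) < (k*(N : ℤ))*((n : ℤ)+1)+(n : ℤ)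
    · refine ⟨(k*(N : ℤ))*((n : ℤ)+1)+(n : ℤ), 0, le_refl 0, by exact_mod_cast hN, by ring,
        hc1, by omega⟩
    · push_neg at hc1
      set d := m - (n : ℤ) - ((k*(N : ℤ))*((n : ℤ)+1)+(n : ℤ)) with hd
      have hd0 : 0 ≤ d := by omega
      set qd := d / ((n : ℤ)+1) with hqd
      set ed := d % ((n : ℤ)+1) with hed
      have hqe : d = ((n : ℤ)+1)*qd + ed := (Int.mul_ediv_add_emod _ _).symm
      have he0 : 0 ≤ ed := Int.emod_nonneg _ (by positivity)
      have hen : ed < (n : ℤ)+1 := Int.emod_lt_of_pos _ (by positivity)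
      have hqd0 : 0 ≤ qd := Int.ediv_nonneg hd0 (by positivity)
      have hcomm : ((n : ℤ)+1)*qd = qd*((n : ℤ)+1) := by ring
      have hsplit : (qd+1)*((n : ℤ)+1) = ((n : ℤ)+1)*qd + ((n : ℤ)+1) := by ring
      have hjlt : qd + 1 < (N : ℤ) := by
        by_contra hq
        push_neg at hq
        have h2 : ((N : ℤ)-1)*((n : ℤ)+1) ≤ qd*((n : ℤ)+1) :=
          mul_le_mul_of_nonneg_right (by omega) (by positivity)
        have h3 : (k*(N : ℤ)+(N : ℤ)-1)*((n : ℤ)+1)+(n : ℤ)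
            = (k*(N : ℤ))*((n : ℤ)+1)+(n : ℤ) + ((N : ℤ)-1)*((n : ℤ)+1) := by ring
        omega
      refine ⟨(k*(N : ℤ))*((n : ℤ)+1)+(n : ℤ) + (qd+1)*((n : ℤ)+1), qd+1, by omega, hjlt,
        by ring, by omega, by omega⟩
  have hval : s7fun n N o = Sum.inr k := by
    rw [s7fun_eq_inr_iff hN]
    exact ⟨j, hj0, hjN, hoeq⟩
  intro hsp
  by_cases hom : o ≤ m
  · have h1 := hsp o (m+1) (by omega) (by push_cast; omega)
    apply h1
    rw [s7_insertZ_le _ _ _ hom, s7_insertZ_self, hval]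
  · push_neg at hom
    have h1 := hsp (m+1) (o+1) (by omega) (by push_cast; omega)
    apply h1
    rw [s7_insertZ_self, s7_insertZ_ge _ _ _ (by omega)]
    have h2 : o+1-1 = o := by omega
    rw [h2, hval]
end

theorem stmt7' {α : Type*} [DecidableEq α] (u : List α)
    (hr : 2 ≤ u.toFinset.card)
    (hocc : ∀ x ∈ u, 2 ≤ u.count x)
    (hsi : StronglyIrreducibleSeq u) :
    ∃ s : ℤ → (Fin (u.toFinset.card - 1) ⊕ ℤ), SaturatedZ u s Set.univ := by
  set n := u.toFinset.card - 1 with hn_def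
  have hcard : u.toFinset.card = n+1 := by omega
  have hn : 0 < n := by omega
  have hune : u ≠ [] := by
    intro h
    rw [h] at hr
    simp at hr
  have hulen : 0 < u.length := List.length_pos_iff.mpr hune
  have Hex : ∃ Z : ℕ, ContainsCopyZ (s7fun n (Z+1)) u := by
    refine ⟨u.length - 1, ?_⟩
    have h := s7_diag hn hcard
    have e : u.length - 1 + 1 = u.length := by omega
    rwa [e]
  haveI : DecidablePred (fun Z => ContainsCopyZ (s7fun n (Z+1)) u) :=
    fun _ => Classical.propDecidable _
  have hNc : ContainsCopyZ (s7fun n (Nat.find Hex + 1)) u := Nat.find_spec Hex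
  set N := Nat.find Hex with hN_def
  have hNpos : 0 < N := by
    rcases Nat.eq_zero_or_pos N with h0 | h
    · exfalso
      apply s7_base hn hcard hocc hsi
      rw [h0] at hNc
      simpa using hNc
    · exact h
  have havoid : ¬ ContainsCopyZ (s7fun n N) u := by
    have h := Nat.find_min Hex (m := N-1) (by omega)
    have e : N - 1 + 1 = N := by omega
    rwa [e] at h
  refine ⟨s7fun n N, ?_, havoid, fun i => trivial, ?_⟩
  · rw [hcard]
    exact s7fun_sparse n N
  · intro x hx m
    match x with
    | Sum.inl t =>
      left
      rw [hcard]
      exact s7_insert_inl_unsparse hn t m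
    | Sum.inr k =>
      by_cases hfr : (k*(N : ℤ)+(N : ℤ)-1)*((n : ℤ)+1)+(n : ℤ)+(n : ℤ) ≤ m
      · right
        exact s7_sat_right hn hNpos hcard hsi hNc k m hfr
      · by_cases hfl : m + (n : ℤ) + 1 ≤ (k*(N : ℤ))*((n : ℤ)+1)+(n : ℤ)
        · right
          exact s7_sat_left hn hNpos hcard hsi hNc k m hfl
        · left
          rw [hcard]
          exact s7_insert_inr_unsparse hn hNpos k m hfr hfl

theorem stmt7 {α : Type*} [DecidableEq α] (u : List α)
    (hr : 2 ≤ u.toFinset.card)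
    (hocc : ∀ x ∈ u, 2 ≤ u.count x)
    (hsi : StronglyIrreducibleSeq u) :
    ∃ s : ℤ → (Fin (u.toFinset.card - 1) ⊕ ℤ), SaturatedZ u s Set.univ := by
  exact stmt7' u hr hocc hsi
end

section
/- Let u be a sequence with exactly r ≥ 2 distinct letters. Then s_r(u), the longest initial segment of the infinite periodic sequence a_1 a_2 ⋯ a_r a_1 a_2 ⋯ that avoids u, is a u-saturated sequence over the alphabet {a_1,…,a_r}. -/
/-- The initial segment of length `len` of the periodic sequence
`(base+1)(base+2)⋯(base+r)(base+1)(base+2)⋯` on the `r` letters `base+1,…,base+r`. -/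
def periodicSeg (r base len : ℕ) : List ℕ :=
  (List.range len).map (fun i => base + i % r + 1)

/- Auxiliary lemmas -/

lemma sparse_getD {r : ℕ} {t : List ℕ} (hs : Sparse r t) {i j : ℕ}
    (hij : i < j) (hj : j < t.length) (hjr : j < i + r) :
    t.getD i 0 ≠ t.getD j 0 := by
  rw [List.getD_eq_getElem t 0 (hij.trans hj), List.getD_eq_getElem t 0 hj]
  exact hs i j hij hj hjr

lemma periodic_step {r : ℕ} {t : List ℕ}
    (hmem : ∀ x ∈ t, x ∈ Set.Icc 1 r) (hs : Sparse r t)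
    {k : ℕ} (hk : k + r < t.length) :
    t.getD (k + r) 0 = t.getD k 0 := by
  by_contra hne
  have hinj : Set.InjOn (fun j => t.getD (k + j) 0) ↑(Finset.range (r + 1)) := by
    intro j1 h1 j2 h2 he
    simp only [Finset.coe_range, Set.mem_Iio] at h1 h2
    by_contra hne2
    rcases lt_trichotomy j1 j2 with h | h | h
    · rcases Nat.lt_or_ge j2 (j1 + r) with hlt | hge
      · exact sparse_getD hs (by omega) (by omega) (by omega) he
      · obtain ⟨rfl, rfl⟩ : j1 = 0 ∧ j2 = r := by omega
        exact hne (by simpa using he.symm)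
    · exact hne2 h
    · rcases Nat.lt_or_ge j1 (j2 + r) with hlt | hge
      · exact sparse_getD hs (by omega) (by omega) (by omega) he.symm
      · obtain ⟨rfl, rfl⟩ : j2 = 0 ∧ j1 = r := by omega
        exact hne (by simpa using he)
  have hmaps : ∀ j ∈ Finset.range (r + 1), t.getD (k + j) 0 ∈ Finset.Icc 1 r := by
    intro j hj
    simp only [Finset.mem_range] at hj
    have hlt : k + j < t.length := by omega
    rw [List.getD_eq_getElem t 0 hlt, Finset.mem_Icc]
    have := hmem _ (List.getElem_mem hlt)
    simpa [Set.mem_Icc] using this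
  have := Finset.card_le_card_of_injOn _ hmaps hinj
  rw [Finset.card_range, Nat.card_Icc] at this
  omega

lemma periodic_mod {r : ℕ} (hr : 0 < r) {t : List ℕ}
    (hmem : ∀ x ∈ t, x ∈ Set.Icc 1 r) (hs : Sparse r t) :
    ∀ k, k < t.length → t.getD k 0 = t.getD (k % r) 0 := by
  intro k
  induction k using Nat.strong_induction_on with
  | _ k ih =>
    intro hk
    rcases Nat.lt_or_ge k r with h | h
    · rw [Nat.mod_eq_of_lt h]
    · have hk' : (k - r) + r = k := by omega
      have h1 : t.getD ((k - r) + r) 0 = t.getD (k - r) 0 :=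
        periodic_step hmem hs (k := k - r) (by omega)
      rw [hk'] at h1
      have h2 : t.getD (k - r) 0 = t.getD ((k - r) % r) 0 := ih (k - r) (by omega) (by omega)
      rw [h1, h2, Nat.mod_eq_sub_mod h]

lemma isCopy_periodic {r : ℕ} (hr : 0 < r) {t : List ℕ}
    (hmem : ∀ x ∈ t, x ∈ Set.Icc 1 r) (hs : Sparse r t) :
    IsCopy t (periodicSeg r 0 t.length) := by
  have hmemp : ∀ x ∈ periodicSeg r 0 t.length, ∃ k, k < t.length ∧ x = k % r + 1 := by
    intro x hx
    simp only [periodicSeg, List.mem_map, List.mem_range] at hx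
    obtain ⟨k, hk, rfl⟩ := hx
    exact ⟨k, hk, by omega⟩
  refine ⟨fun j => t.getD (j - 1) 0, ?_, ?_⟩
  · intro x hx y hy he
    obtain ⟨kx, hkx, rfl⟩ := hmemp x hx
    obtain ⟨ky, hky, rfl⟩ := hmemp y hy
    simp only [Nat.add_sub_cancel] at he
    by_contra hne
    have h1 : kx % r < t.length := lt_of_le_of_lt (Nat.mod_le _ _) hkx
    have h2 : ky % r < t.length := lt_of_le_of_lt (Nat.mod_le _ _) hky
    have h1r : kx % r < r := Nat.mod_lt _ hr
    have h2r : ky % r < r := Nat.mod_lt _ hr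
    rcases lt_trichotomy (kx % r) (ky % r) with h | h | h
    · exact sparse_getD hs h h2 (by omega) he
    · exact hne (by omega)
    · exact sparse_getD hs h h1 (by omega) he.symm
  · apply List.ext_getElem (by simp [periodicSeg])
    intro k hk1 hk2
    have hk : k < t.length := hk1
    simp only [periodicSeg, List.getElem_map, List.getElem_range, Nat.add_sub_cancel,
      Nat.zero_add]
    rw [← List.getD_eq_getElem t 0 hk, periodic_mod hr hmem hs k hk]

lemma containsCopy_trans {A : Type} {α : Type*} {t p : List A} {u : List α}
    (h1 : IsCopy t p) (h2 : ContainsCopy p u) : ContainsCopy t u := by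
  obtain ⟨f, hf, rfl⟩ := h1
  obtain ⟨v, hv, g, hg, rfl⟩ := h2
  refine ⟨(u.map g).map f, hv.map f, fun x => f (g x), ?_, by simp⟩
  intro x hx y hy he
  exact hg x hx y hy (hf _ (hv.subset (by simp; exact ⟨x, hx, rfl⟩))
    _ (hv.subset (by simp; exact ⟨y, hy, rfl⟩)) he)

lemma mem_periodicSeg {r len x : ℕ} (hr : 0 < r) (hx : x ∈ periodicSeg r 0 len) :
    x ∈ Set.Icc 1 r := by
  simp only [periodicSeg, List.mem_map, List.mem_range] at hx
  obtain ⟨k, hk, rfl⟩ := hx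
  have := Nat.mod_lt k hr
  simp [Set.mem_Icc]; omega

lemma sparse_periodicSeg (r len : ℕ) : Sparse r (periodicSeg r 0 len) := by
  intro i j hij hj hjr
  have hjlen : j < len := by simpa [periodicSeg] using hj
  have hilen : i < len := hij.trans hjlen
  simp only [periodicSeg, List.get_eq_getElem, List.getElem_map, List.getElem_range]
  intro he
  have hmod : i % r = j % r := by omega
  have hdvd : r ∣ j - i := (Nat.modEq_iff_dvd' hij.le).mp hmod
  have := Nat.le_of_dvd (by omega) hdvd
  omega

theorem stmt9 {α : Type*} [DecidableEq α] (u : List α)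
    (hr : 2 ≤ u.toFinset.card) (L : ℕ)
    -- `s_r(u)` is the periodic segment of length `L`: it avoids `u` and is longest such:
    (havoid : ¬ ContainsCopy (periodicSeg u.toFinset.card 0 L) u)
    (hmax : ContainsCopy (periodicSeg u.toFinset.card 0 (L + 1)) u) :
    Saturated u (periodicSeg u.toFinset.card 0 L) (Set.Icc 1 u.toFinset.card) := by
  set r := u.toFinset.card with hrdef
  have hr0 : 0 < r := by omega
  have hlen : (periodicSeg r 0 L).length = L := by simp [periodicSeg]
  refine ⟨sparse_periodicSeg r L, havoid, fun x hx => mem_periodicSeg hr0 hx, ?_⟩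
  intro x hx i hi
  by_cases hsp : Sparse r ((periodicSeg r 0 L).insertIdx i x)
  · right
    set t := (periodicSeg r 0 L).insertIdx i x with htdef
    have hilen : i ≤ (periodicSeg r 0 L).length := hi
    have htlen : t.length = L + 1 := by
      rw [htdef, List.length_insertIdx, if_pos hilen, hlen]
    have htmem : ∀ y ∈ t, y ∈ Set.Icc 1 r := by
      intro y hy
      rcases List.mem_insertIdx hilen |>.mp hy with h | h
      · exact h ▸ hx
      · exact mem_periodicSeg hr0 h
    have hcopy := isCopy_periodic hr0 htmem hsp
    rw [htlen] at hcopy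
    exact containsCopy_trans hcopy hmax
  · left; exact hsp
end

section
/- Let u be a sequence with exactly r ≥ 2 distinct letters. Then Sat(r,u), the minimum length of a u-saturated sequence over an alphabet of exactly r letters, equals the length of s_r(u). -/
/-- `Sat n u` is the minimum length of a `u`-saturated sequence over an alphabet of
`n` letters. -/
noncomputable def Sat {α : Type*} [DecidableEq α] (n : ℕ) (u : List α) : ℕ :=
  sInf {L | ∃ s : List (Fin n), Saturated u s Set.univ ∧ s.length = L}

/-! ### Auxiliary lemmas -/

lemma getElem_idx_congr {A : Type*} (s : List A) {i j : ℕ} (h : i = j) (hi : i < s.length) :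
    s[i]'hi = s[j]'(h ▸ hi) := by subst h; rfl

lemma periodicSeg_length (r base len : ℕ) : (periodicSeg r base len).length = len := by
  simp [periodicSeg]

lemma periodicSeg_sublist (r base : ℕ) {k L : ℕ} (h : k ≤ L) :
    (periodicSeg r base k).Sublist (periodicSeg r base L) :=
  (List.range_sublist.mpr h).map _

lemma Sparse.ne {A : Type*} {r : ℕ} {s : List A} (hs : Sparse r s) {i j : ℕ} (hij : i < j)
    (hj : j < s.length) (h : j < i + r) : s[i]'(hij.trans hj) ≠ s[j] := by
  simpa [List.get_eq_getElem] using hs i j hij hj h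

lemma sparse_of {A : Type*} {r : ℕ} {s : List A}
    (h : ∀ i j : ℕ, (hij : i < j) → (hj : j < s.length) → j < i + r →
      s[i]'(hij.trans hj) ≠ s[j]) : Sparse r s := by
  intro i j hij hj hlt
  simpa [List.get_eq_getElem] using h i j hij hj hlt

lemma ContainsCopy.of_isCopy {α β γ : Type*} {u : List α} {t : List β} {s : List γ}
    (h : ContainsCopy t u) (hc : IsCopy s t) : ContainsCopy s u := by
  obtain ⟨f, hinj, rfl⟩ := hc
  obtain ⟨v, hv, g, hg, rfl⟩ := h
  refine ⟨(u.map g).map f, hv.map f, f ∘ g, ?_, by rw [List.map_map]⟩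
  intro x hx y hy hxy
  exact hg x hx y hy (hinj _ (hv.subset (List.mem_map_of_mem (f := g) hx)) _
    (hv.subset (List.mem_map_of_mem (f := g) hy)) hxy)

lemma ContainsCopy.mono {α β : Type*} {u : List α} {s t : List β}
    (h : ContainsCopy s u) (hsub : s.Sublist t) : ContainsCopy t u := by
  obtain ⟨v, hv, hc⟩ := h
  exact ⟨v, hv.trans hsub, hc⟩

lemma IsCopy.symm {β γ : Type*} [Nonempty β] {t : List β} {s : List γ}
    (hc : IsCopy s t) : IsCopy t s := by
  classical
  obtain ⟨f, hinj, rfl⟩ := hc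
  set h : γ → β := fun c => if hx : ∃ a, a ∈ t ∧ f a = c then hx.choose else Classical.arbitrary β
    with hhdef
  have key : ∀ a ∈ t, h (f a) = a := by
    intro a ha
    have hx : ∃ b, b ∈ t ∧ f b = f a := ⟨a, ha, rfl⟩
    simp only [hhdef, dif_pos hx]
    exact hinj _ hx.choose_spec.1 _ ha hx.choose_spec.2
  refine ⟨h, ?_, ?_⟩
  · intro x hx y hy hxy
    simp only [List.mem_map] at hx hy
    obtain ⟨a, ha, rfl⟩ := hx
    obtain ⟨b, hb, rfl⟩ := hy
    rw [key a ha, key b hb] at hxy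
    rw [hxy]
  · rw [List.map_map]
    exact ((List.map_congr_left fun a ha => (key a ha : (h ∘ f) a = id a)).trans
      (List.map_id t)).symm

lemma Sparse.period {r : ℕ} {s : List (Fin r)} (hs : Sparse r s) (j : ℕ)
    (hjr : r ≤ j) (h : j < s.length) : s[j] = s[j - r]'(by omega) := by
  classical
  have hr : 0 < r := (s[j]'h).pos
  obtain ⟨i, rfl⟩ : ∃ i, j = i + r := ⟨j - r, by omega⟩
  simp only [Nat.add_sub_cancel]
  set W : Finset (Fin r) :=
    Finset.image (fun k : Fin (r - 1) => s[i + 1 + (k : ℕ)]'(by have := k.isLt; omega))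
      Finset.univ with hW
  have hinj : Function.Injective
      (fun k : Fin (r - 1) => s[i + 1 + (k : ℕ)]'(by have := k.isLt; omega)) := by
    intro k1 k2 hk
    by_contra hne
    have hne' : (k1 : ℕ) ≠ (k2 : ℕ) := fun e => hne (Fin.ext e)
    have h1 := k1.isLt
    have h2 := k2.isLt
    rcases Nat.lt_or_ge (k1 : ℕ) (k2 : ℕ) with hlt | hge
    · exact hs.ne (i := i + 1 + k1) (j := i + 1 + k2) (by omega) (by omega) (by omega) hk
    · have hlt : (k2 : ℕ) < (k1 : ℕ) := by omega
      exact hs.ne (i := i + 1 + k2) (j := i + 1 + k1) (by omega) (by omega) (by omega) hk.symm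
  have hWcard : W.card = r - 1 := by
    rw [hW, Finset.card_image_of_injective _ hinj, Finset.card_univ, Fintype.card_fin]
  have hcompl : ∀ x ∈ Wᶜ, ∀ y ∈ Wᶜ, x = y := by
    apply Finset.card_le_one.mp
    rw [Finset.card_compl, hWcard, Fintype.card_fin]
    omega
  have ha : s[i]'(by omega) ∉ W := by
    intro hmem
    rw [hW] at hmem
    obtain ⟨k, -, hk⟩ := Finset.mem_image.mp hmem
    have := k.isLt
    exact hs.ne (i := i) (j := i + 1 + k) (by omega) (by omega) (by omega) hk.symm
  have hb : s[i + r]'h ∉ W := by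
    intro hmem
    rw [hW] at hmem
    obtain ⟨k, -, hk⟩ := Finset.mem_image.mp hmem
    have := k.isLt
    exact hs.ne (i := i + 1 + k) (j := i + r) (by omega) (by omega) (by omega) hk
  exact hcompl _ (Finset.mem_compl.mpr hb) _ (Finset.mem_compl.mpr ha)

lemma Sparse.getElem_mod {r : ℕ} {s : List (Fin r)} (hs : Sparse r s) :
    ∀ i, (h : i < s.length) → s[i] = s[i % r]'(lt_of_le_of_lt (Nat.mod_le i r) h) := by
  intro i
  induction i using Nat.strong_induction_on with
  | _ i ih =>
    intro h
    have hr : 0 < r := (s[i]'h).pos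
    rcases Nat.lt_or_ge i r with hir | hir
    · exact getElem_idx_congr s (Nat.mod_eq_of_lt hir).symm h
    · rw [hs.period i hir h, ih (i - r) (by omega) (by omega)]
      exact getElem_idx_congr s (by conv_rhs => rw [← Nat.sub_add_cancel hir, Nat.add_mod_right]) _

lemma Sparse.isCopy_periodicSeg {r : ℕ} (hr : 0 < r) {s : List (Fin r)} (hs : Sparse r s) :
    IsCopy s (periodicSeg r 0 s.length) := by
  classical
  refine ⟨fun n => if h : n - 1 < s.length then s[n - 1]'h else ⟨0, hr⟩, ?_, ?_⟩
  · intro x hx y hy hxy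
    simp only [periodicSeg, List.mem_map, List.mem_range] at hx hy
    obtain ⟨i, hi, rfl⟩ := hx
    obtain ⟨j, hj, rfl⟩ := hy
    have hi' : i % r < s.length := lt_of_le_of_lt (Nat.mod_le i r) hi
    have hj' : j % r < s.length := lt_of_le_of_lt (Nat.mod_le j r) hj
    have hival : (0 + i % r + 1) - 1 = i % r := by omega
    have hjval : (0 + j % r + 1) - 1 = j % r := by omega
    beta_reduce at hxy
    rw [dif_pos (show 0 + i % r + 1 - 1 < s.length by omega),
        dif_pos (show 0 + j % r + 1 - 1 < s.length by omega)] at hxy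
    rw [getElem_idx_congr s hival, getElem_idx_congr s hjval] at hxy
    have him : i % r < r := Nat.mod_lt _ hr
    have hjm : j % r < r := Nat.mod_lt _ hr
    have : i % r = j % r := by
      by_contra hne
      rcases Nat.lt_or_ge (i % r) (j % r) with hlt | hge
      · exact hs.ne (i := i % r) (j := j % r) hlt hj' (by omega) hxy
      · have hlt : j % r < i % r := by omega
        exact hs.ne (i := j % r) (j := i % r) hlt hi' (by omega) hxy.symm
    rw [this]
  · refine List.ext_getElem (by simp [periodicSeg]) ?_
    intro n h1 h2
    simp only [periodicSeg, List.getElem_map, List.getElem_range]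
    have hn : n < s.length := h1
    have hval : (0 + n % r + 1) - 1 = n % r := by omega
    have hn' : n % r < s.length := lt_of_le_of_lt (Nat.mod_le n r) hn
    beta_reduce
    rw [dif_pos (show 0 + n % r + 1 - 1 < s.length by omega),
        getElem_idx_congr s hval, ← hs.getElem_mod n hn]

lemma exists_sparse_extension {r : ℕ} (hr : 0 < r) {s : List (Fin r)} (hs : Sparse r s) :
    ∃ x : Fin r, Sparse r (s ++ [x]) := by
  classical
  set d := s.length - (r - 1) with hd
  set T : Finset (Fin r) := (s.drop d).toFinset with hT
  have hTcard : T.card < r := by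
    calc T.card ≤ (s.drop d).length := List.toFinset_card_le _
      _ ≤ r - 1 := by rw [List.length_drop]; omega
      _ < r := by omega
  have hex : ∃ x : Fin r, x ∉ T := by
    by_contra hc
    push_neg at hc
    have hsub : (Finset.univ : Finset (Fin r)) ⊆ T := fun x _ => hc x
    have := Finset.card_le_card hsub
    rw [Finset.card_univ, Fintype.card_fin] at this
    omega
  obtain ⟨x, hx⟩ := hex
  refine ⟨x, sparse_of ?_⟩
  intro i j hij hj hjr
  rw [List.length_append, List.length_singleton] at hj
  rcases Nat.lt_or_ge j s.length with hjs | hjs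
  · have hne := hs.ne hij hjs hjr
    rwa [List.getElem_append_left (hij.trans hjs), List.getElem_append_left hjs]
  · have hjlen : j = s.length := by omega
    have hi : i < s.length := by omega
    rw [List.getElem_append_left hi, List.getElem_concat_length (l := s) (a := x) hjlen]
    intro hEq
    apply hx
    rw [hT, List.mem_toFinset]
    have hdi : d ≤ i := by omega
    have hlt : i - d < (s.drop d).length := by rw [List.length_drop]; omega
    have hmem := List.getElem_mem (l := s.drop d) (n := i - d) hlt
    rw [List.getElem_drop] at hmem
    rwa [getElem_idx_congr s (show d + (i - d) = i by omega), hEq] at hmem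

theorem stmt10 {α : Type*} [DecidableEq α] (u : List α)
    (hr : 2 ≤ u.toFinset.card) (L : ℕ)
    -- `s_r(u)` is the periodic segment of length `L`: it avoids `u` and is longest such:
    (havoid : ¬ ContainsCopy (periodicSeg u.toFinset.card 0 L) u)
    (hmax : ContainsCopy (periodicSeg u.toFinset.card 0 (L + 1)) u) :
    Sat u.toFinset.card u = L := by
  classical
  set r := u.toFinset.card with hrdef
  have hr0 : 0 < r := by omega
  -- the witness
  set p : List (Fin r) := (List.range L).map (fun i => (⟨i % r, Nat.mod_lt _ hr0⟩ : Fin r))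
    with hp
  have hplen : p.length = L := by simp [hp]
  have hpsparse : Sparse r p := by
    apply sparse_of
    intro i j hij hj hjr
    rw [hplen] at hj
    simp only [hp, List.getElem_map, List.getElem_range]
    intro hEq
    have hmod : i % r = j % r := congrArg Fin.val hEq
    have hdvd : r ∣ j - i := (Nat.modEq_iff_dvd' hij.le).mp hmod
    have := Nat.le_of_dvd (by omega) hdvd
    omega
  have hpavoid : ¬ ContainsCopy p u := by
    intro hcc
    apply havoid
    have hcopy : IsCopy p (periodicSeg r 0 L) := hplen ▸ hpsparse.isCopy_periodicSeg hr0
    exact hcc.of_isCopy hcopy.symm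
  have hpsat : Saturated u p Set.univ := by
    refine ⟨hpsparse, hpavoid, fun x _ => Set.mem_univ x, ?_⟩
    intro x _ i hi
    by_cases hsp : Sparse r (p.insertIdx i x)
    · right
      have hlen : (p.insertIdx i x).length = L + 1 := by
        rw [List.length_insertIdx, if_pos hi, hplen]
      have hcopy : IsCopy (p.insertIdx i x) (periodicSeg r 0 (L + 1)) :=
        hlen ▸ hsp.isCopy_periodicSeg hr0
      exact hmax.of_isCopy hcopy
    · left; exact hsp
  have hLmem : L ∈ {M | ∃ s : List (Fin r), Saturated u s Set.univ ∧ s.length = M} :=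
    ⟨p, hpsat, hplen⟩
  refine le_antisymm (Nat.sInf_le hLmem) (le_csInf ⟨L, hLmem⟩ ?_)
  rintro M ⟨t, ht, rfl⟩
  by_contra hlt
  push_neg at hlt
  obtain ⟨htsparse, htavoid, -, htsat⟩ := ht
  obtain ⟨x, hxsparse⟩ := exists_sparse_extension hr0 htsparse
  have hins : t.insertIdx t.length x = t ++ [x] := List.insertIdx_length_self
  rcases htsat x (Set.mem_univ x) t.length le_rfl with hbad | hcc
  · exact hbad (hins ▸ hxsparse)
  · rw [hins] at hcc
    apply havoid
    have hlen : (t ++ [x]).length = t.length + 1 := by simp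
    have hcopy : IsCopy (t ++ [x]) (periodicSeg r 0 (t.length + 1)) :=
      hlen ▸ hxsparse.isCopy_periodicSeg hr0
    have := hcc.of_isCopy hcopy.symm
    exact this.mono (periodicSeg_sublist r 0 (by omega))
end

section
/- Let u be a sequence of length at least 6 with exactly three distinct letters, whose first three letters a, b, c are pairwise distinct, and whose last three letters x, y, z satisfy xyz ∈ {abc, bca, cab}. Assume f_0(u) ≥ f_1(u) + 5. Then for every integer n ≥ 3, the sequence s[n] avoids u. -/
/-- number of consecutive pairs of the form `ab`, `bc`, `ca` in `u`. -/
def f0 {α : Type*} [DecidableEq α] (u : List α) (a b c : α) : ℕ :=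
  (u.zip u.tail).countP (fun p => decide (p = (a, b) ∨ p = (b, c) ∨ p = (c, a)))

/-- number of consecutive pairs of the form `ac`, `ba`, `cb` in `u`. -/
def f1 {α : Type*} [DecidableEq α] (u : List α) (a b c : α) : ℕ :=
  (u.zip u.tail).countP (fun p => decide (p = (a, c) ∨ p = (b, a) ∨ p = (c, b)))

/-- The initial segment of length `len` of the periodic sequence `p,q,z,p,q,z,…`. -/
def seg3 {A : Type*} (p q z : A) (len : ℕ) : List A :=
  (List.range len).map (fun i => if i % 3 = 0 then p else if i % 3 = 1 then q else z)

/-- The recursively defined family `s[n]` over the alphabet `{1,…,n}`, where `L` is the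
length of `s₃(u)`: `s[3]` is the copy of `s₃(u)` on `1,2,3`, and `s[n]` is `s[n-1]`
followed by the copy of `s₃(u)` on `x,y,n` with its first two letters removed, `x,y`
being the last two letters of `s[n-1]`. -/
def sFam (L : ℕ) : ℕ → List ℕ
  | 0 => []
  | 1 => []
  | 2 => []
  | 3 => seg3 1 2 3 L
  | (n + 4) =>
      let prev := sFam L (n + 3)
      prev ++ (seg3 (prev.getD (prev.length - 2) 0) (prev.getD (prev.length - 1) 0)
        (n + 4) L).drop 2

namespace APx
open List

/-- step weight between codes (codes < 3): 1 if c' = c+1 mod 3, 2 if c' = c+2 mod 3, 3 if equal -/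
def stp (c c' : ℕ) : ℕ := (c' + 2 - c) % 3 + 1

/-- least position ≥ j congruent to c mod 3 (for c < 3) -/
def pos3 (j c : ℕ) : ℕ := j + (c + 3 - j % 3) % 3

def req : ℕ → List ℕ → ℕ
  | j, [] => j
  | j, c :: cs => req (pos3 j c + 1) cs

def S3 : List ℕ → ℕ
  | [] => 0
  | [_] => 0
  | c :: c' :: r => stp c c' + S3 (c' :: r)

lemma stp_self (c : ℕ) : stp c c = 3 := by unfold stp; omega

lemma pos3_ge (j c : ℕ) : j ≤ pos3 j c := by unfold pos3; omega

lemma pos3_mod (j : ℕ) {c : ℕ} (h : c < 3) : pos3 j c % 3 = c := by unfold pos3; omega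

lemma pos3_le {j c p : ℕ} (h : c < 3) (hp : j ≤ p) (hm : p % 3 = c) : pos3 j c ≤ p := by
  unfold pos3; omega

lemma pos3_self (j : ℕ) : pos3 j (j % 3) = j := by unfold pos3; omega

lemma pos3_mono {j j' : ℕ} (c : ℕ) (hc : c < 3) (h : j ≤ j') : pos3 j c ≤ pos3 j' c :=
  pos3_le hc (h.trans (pos3_ge j' c)) (pos3_mod j' hc)

lemma req_ge (cs : List ℕ) : ∀ j, j ≤ req j cs := by
  induction cs with
  | nil => intro j; simp [req]
  | cons c cs ih => intro j; exact le_trans (le_trans (pos3_ge j c) (Nat.le_succ _)) (ih _)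

lemma req_mono (cs : List ℕ) (hcs : ∀ c ∈ cs, c < 3) : ∀ {j j'}, j ≤ j' → req j cs ≤ req j' cs := by
  induction cs with
  | nil => intro j j' h; simpa [req] using h
  | cons c cs ih =>
    intro j j' h
    simp only [req]
    exact ih (fun x hx => hcs x (List.mem_cons_of_mem _ hx))
      (Nat.succ_le_succ (pos3_mono c (hcs c (List.mem_cons_self)) h))

lemma pos3_succ {c c' p : ℕ} (hc : c < 3) (hc' : c' < 3) (hm : p % 3 = c) :
    pos3 (p+1) c' = p + stp c c' := by unfold pos3 stp; omega

lemma S3_cons (c : ℕ) (x : ℕ) (X : List ℕ) : S3 (c :: x :: X) = stp c x + S3 (x :: X) := rfl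

lemma req_eq_S : ∀ (cs : List ℕ) (c j : ℕ), c < 3 → (∀ x ∈ cs, x < 3) →
    req j (c :: cs) = pos3 j c + 1 + S3 (c :: cs) := by
  intro cs
  induction cs with
  | nil => intro c j _ _; simp [req, S3]
  | cons c' r ih =>
    intro c j hc hlt
    have hc' : c' < 3 := hlt c' (List.mem_cons_self)
    have : req j (c :: c' :: r) = req (pos3 j c + 1) (c' :: r) := rfl
    rw [this, ih c' (pos3 j c + 1) hc' (fun x hx => hlt x (List.mem_cons_of_mem _ hx)),
      pos3_succ hc hc' (pos3_mod j hc), S3_cons]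
    ring

lemma R1coded : ∀ (len : ℕ) (j : ℕ) (cs : List ℕ),
    cs <+ (List.range' j len).map (· % 3) → req j cs ≤ j + len := by
  intro len
  induction len with
  | zero =>
    intro j cs h
    have : cs = [] := List.sublist_nil.mp (by simpa using h)
    simp [this, req]
  | succ len ih =>
    intro j cs h
    have hr : List.range' j (len+1) = j :: List.range' (j+1) len := rfl
    rw [hr] at h
    have hcs3 : ∀ c ∈ cs, c < 3 := by
      intro c hc
      have := h.subset hc
      simp only [List.mem_map] at this
      obtain ⟨i, _, rfl⟩ := this
      omega
    cases h with
    | cons _ h =>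
      calc req j cs ≤ req (j+1) cs := req_mono cs hcs3 (Nat.le_succ j)
        _ ≤ (j+1) + len := ih (j+1) cs h
        _ = j + (len+1) := by omega
    | cons_cons _ h =>
      rename_i cs'
      show req (pos3 j (j % 3) + 1) cs' ≤ _
      rw [pos3_self]
      have := ih (j+1) cs' h
      omega

lemma R2coded : ∀ (cs : List ℕ), (∀ c ∈ cs, c < 3) → ∀ j,
    cs <+ (List.range' j (req j cs - j)).map (· % 3) := by
  intro cs
  induction cs with
  | nil => intro _ j; simp
  | cons c cs ih =>
    intro h j
    have hc : c < 3 := h c (List.mem_cons_self)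
    set P := pos3 j c with hP
    have h1 : j ≤ P := pos3_ge j c
    have h2 : P + 1 ≤ req (P+1) cs := req_ge cs (P+1)
    have hreq : req j (c :: cs) = req (P+1) cs := rfl
    have hsplit : List.range' j (req j (c :: cs) - j)
        = (List.range' j (P - j) ++ List.range' P 1) ++ List.range' (P+1) (req (P+1) cs - (P+1)) := by
      rw [hreq]
      have e1 : List.range' j (P - j) ++ List.range' (j + (P-j)) 1 = List.range' j ((P-j)+1) := by
        have := List.range'_append (s := j) (m := P-j) (n := 1) (step := 1); simpa [Nat.add_comm] using this
      have e2 : List.range' j ((P-j)+1) ++ List.range' (j + ((P-j)+1)) (req (P+1) cs - (P+1))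
          = List.range' j (((P-j)+1) + (req (P+1) cs - (P+1))) := by
        have := List.range'_append (s := j) (m := (P-j)+1) (n := req (P+1) cs - (P+1)) (step := 1)
        simpa [Nat.add_comm] using this
      have ha : j + (P - j) = P := by omega
      have hb : j + ((P-j)+1) = P + 1 := by omega
      have hc2 : ((P-j)+1) + (req (P+1) cs - (P+1)) = req (P+1) cs - j := by omega
      rw [ha] at e1
      rw [hb, hc2] at e2
      rw [← e2, ← e1]
    rw [hsplit]
    rw [List.map_append, List.map_append]
    have hmid : (List.range' P 1).map (· % 3) = [c] := by
      simp [List.range'_one, pos3_mod j hc, hP]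
    rw [hmid]
    have htail := ih (fun x hx => h x (List.mem_cons_of_mem _ hx)) (P+1)
    have : c :: cs <+ [c] ++ (List.range' (P+1) (req (P+1) cs - (P+1))).map (· % 3) := by
      simpa using List.Sublist.cons_cons c htail
    calc c :: cs <+ [c] ++ (List.range' (P+1) (req (P+1) cs - (P+1))).map (· % 3) := this
      _ <+ _ := List.Sublist.append (List.sublist_append_right _ _) (List.Sublist.refl _)

lemma S3_take_drop : ∀ (cs : List ℕ) (i : ℕ), S3 cs = S3 (cs.take (i+1)) + S3 (cs.drop i) := by
  intro cs
  induction cs with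
  | nil => intro i; simp [S3]
  | cons c cs ih =>
    intro i
    cases i with
    | zero =>
      cases cs with
      | nil => simp [S3]
      | cons c' r => simp [S3]
    | succ i =>
      cases cs with
      | nil => simp [S3]
      | cons c' r =>
        have h1 : (c :: c' :: r).take (i+1+1) = c :: (c' :: r).take (i+1) := rfl
        have h2 : (c :: c' :: r).drop (i+1) = (c' :: r).drop i := rfl
        have h3 : (c' :: r).take (i+1) = c' :: r.take i := rfl
        rw [h1, h2, h3, S3_cons, S3_cons]
        have := ih i
        rw [h3] at this
        omega

/-- the letter of the periodic word at position i -/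
def dec3 {A : Type*} (p q z : A) (i : ℕ) : A := if i % 3 = 0 then p else if i % 3 = 1 then q else z

/-- code of a letter -/
def cd {A : Type*} [DecidableEq A] (p q z : A) (w : A) : ℕ := if w = p then 0 else if w = q then 1 else 2

lemma cd_lt3 {A : Type*} [DecidableEq A] (p q z w : A) : cd p q z w < 3 := by
  unfold cd; split <;> [omega; split <;> omega]

lemma dec3_mod {A : Type*} (p q z : A) (i : ℕ) : dec3 p q z (i % 3) = dec3 p q z i := by
  simp [dec3, Nat.mod_mod_of_dvd]

lemma cd_dec3 {A : Type*} [DecidableEq A] {p q z : A} (hpq : p ≠ q) (hpz : p ≠ z) (hqz : q ≠ z)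
    (i : ℕ) : cd p q z (dec3 p q z i) = i % 3 := by
  have h : i % 3 = 0 ∨ i % 3 = 1 ∨ i % 3 = 2 := by omega
  rcases h with h | h | h <;> simp [dec3, cd, h, hpq, hpz, hqz, hpq.symm, hpz.symm, hqz.symm]

lemma dec3_mem {A : Type*} (p q z : A) (i : ℕ) : dec3 p q z i = p ∨ dec3 p q z i = q ∨ dec3 p q z i = z := by
  unfold dec3; split <;> [left; skip] <;> [rfl; (split <;> simp)]

lemma seg3_eq_map {A : Type*} (p q z : A) (m : ℕ) :
    seg3 p q z m = (List.range m).map (dec3 p q z) := rfl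

lemma seg3_length {A : Type*} (p q z : A) (m : ℕ) : (seg3 p q z m).length = m := by
  simp [seg3_eq_map]

lemma drop_range' : ∀ (i n s : ℕ), (List.range' s n).drop i = List.range' (s+i) (n-i) := by
  intro i
  induction i with
  | zero => intro n s; simp
  | succ i ih =>
    intro n s
    cases n with
    | zero => simp
    | succ n =>
      have : List.range' s (n+1) = s :: List.range' (s+1) n := rfl
      rw [this]
      have : (s :: List.range' (s+1) n).drop (i+1) = (List.range' (s+1) n).drop i := rfl
      rw [this, ih]
      congr 1 <;> omega

lemma seg3_drop {A : Type*} (p q z : A) (m d : ℕ) :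
    (seg3 p q z m).drop d = (List.range' d (m - d)).map (dec3 p q z) := by
  rw [seg3_eq_map, ← List.map_drop, List.range_eq_range', drop_range', Nat.zero_add]

lemma seg3_mem {A : Type*} {p q z : A} {m : ℕ} {w : A} (h : w ∈ seg3 p q z m) :
    w = p ∨ w = q ∨ w = z := by
  rw [seg3_eq_map] at h
  simp only [List.mem_map] at h
  obtain ⟨i, _, rfl⟩ := h
  exact dec3_mem p q z i

lemma seg3_getElem {A : Type*} (p q z : A) {m i : ℕ} (h : i < (seg3 p q z m).length) :
    (seg3 p q z m)[i] = dec3 p q z i := by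
  have h' : i < m := by simpa [seg3_length] using h
  simp [seg3_eq_map, List.getElem_map, List.getElem_range, h']

lemma seg3_getD {A : Type*} (p q z : A) {m i : ℕ} (h : i < m) (dflt : A) :
    (seg3 p q z m).getD i dflt = dec3 p q z i := by
  rw [List.getD_eq_getElem _ _ (by simpa [seg3_length] using h)]
  exact seg3_getElem p q z _

/-- number of consecutive equal pairs -/
def f2c {α : Type*} [DecidableEq α] (u : List α) : ℕ :=
  (u.zip u.tail).countP (fun p => decide (p.1 = p.2))

lemma orient (g0 g1 g2 : ℕ) (h0 : g0 < 3) (h1 : g1 < 3) (h2 : g2 < 3)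
    (d01 : g0 ≠ g1) (d02 : g0 ≠ g2) (d12 : g1 ≠ g2) :
    ∃ A B : ℕ, ((A = 1 ∧ B = 2) ∨ (A = 2 ∧ B = 1)) ∧
      stp g0 g1 = A ∧ stp g1 g2 = A ∧ stp g2 g0 = A ∧
      stp g0 g2 = B ∧ stp g1 g0 = B ∧ stp g2 g1 = B := by
  interval_cases g0 <;> interval_cases g1 <;> interval_cases g2 <;> simp_all <;>
    first
      | decide
      | exact ⟨1, 2, Or.inl ⟨rfl, rfl⟩, by decide⟩
      | exact ⟨2, 1, Or.inr ⟨rfl, rfl⟩, by decide⟩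

lemma S3_count {α : Type*} [DecidableEq α] (a b c : α)
    (hab : a ≠ b) (hac : a ≠ c) (hbc : b ≠ c) (γ : α → ℕ) (A B : ℕ)
    (t1 : stp (γ a) (γ b) = A) (t2 : stp (γ b) (γ c) = A) (t3 : stp (γ c) (γ a) = A)
    (t4 : stp (γ a) (γ c) = B) (t5 : stp (γ b) (γ a) = B) (t6 : stp (γ c) (γ b) = B) :
    ∀ (v : List α), (∀ w ∈ v, w = a ∨ w = b ∨ w = c) →
      S3 (v.map γ) = A * f0 v a b c + B * f1 v a b c + 3 * f2c v := by
  intro v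
  induction v with
  | nil => intro _; simp [S3, f0, f1, f2c]
  | cons x v ih =>
    intro hmem
    cases v with
    | nil => simp [S3, f0, f1, f2c]
    | cons y r =>
      have hx : x = a ∨ x = b ∨ x = c := hmem x (by simp)
      have hy : y = a ∨ y = b ∨ y = c := hmem y (by simp)
      have ihr := ih (fun w hw => hmem w (List.mem_cons_of_mem _ hw))
      have hzip : (x :: y :: r).zip (x :: y :: r).tail = (x, y) :: ((y :: r).zip (y :: r).tail) := rfl
      have e0 : f0 (x :: y :: r) a b c
          = f0 (y :: r) a b c + (if ((x,y) = (a, b) ∨ (x,y) = (b, c) ∨ (x,y) = (c, a)) then 1 else 0) := by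
        simp [f0, hzip, List.countP_cons]
      have e1 : f1 (x :: y :: r) a b c
          = f1 (y :: r) a b c + (if ((x,y) = (a, c) ∨ (x,y) = (b, a) ∨ (x,y) = (c, b)) then 1 else 0) := by
        simp [f1, hzip, List.countP_cons]
      have e2 : f2c (x :: y :: r)
          = f2c (y :: r) + (if x = y then 1 else 0) := by
        simp [f2c, hzip, List.countP_cons]
      have hmap : (x :: y :: r).map γ = γ x :: (y :: r).map γ := rfl
      rw [hmap, List.map_cons, S3_cons, ← List.map_cons, ihr, e0, e1, e2]
      have key : stp (γ x) (γ y)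
          = A * (if ((x,y) = (a, b) ∨ (x,y) = (b, c) ∨ (x,y) = (c, a)) then 1 else 0)
          + B * (if ((x,y) = (a, c) ∨ (x,y) = (b, a) ∨ (x,y) = (c, b)) then 1 else 0)
          + 3 * (if x = y then 1 else 0) := by
        rcases hx with rfl | rfl | rfl <;> rcases hy with rfl | rfl | rfl <;>
          simp [Prod.mk.injEq, hab, hac, hbc, hab.symm, hac.symm, hbc.symm, Ne.symm,
            stp_self, t1, t2, t3, t4, t5, t6]
      rw [key]; ring

lemma dec3_ne {A : Type*} [DecidableEq A] {p q z : A} (hpq : p ≠ q) (hpz : p ≠ z) (hqz : q ≠ z)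
    {i j : ℕ} (h : i % 3 ≠ j % 3) : dec3 p q z i ≠ dec3 p q z j := by
  intro he
  apply h
  have := cd_dec3 hpq hpz hqz (z := z) i
  rw [he, cd_dec3 hpq hpz hqz] at this
  omega

def D1 (s : List ℕ) : ℕ := s.getD (s.length - 2) 0
def D2 (s : List ℕ) : ℕ := s.getD (s.length - 1) 0

lemma sFam_succ (L n : ℕ) : sFam L (n+4)
    = sFam L (n+3) ++ (seg3 (D1 (sFam L (n+3))) (D2 (sFam L (n+3))) (n+4) L).drop 2 := rfl

lemma getD_drop {l : List ℕ} {k i : ℕ} (h : k + i < l.length) :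
    (l.drop k).getD i 0 = l.getD (k+i) 0 := by
  rw [List.getD_eq_getElem _ _ (by simp; omega), List.getD_eq_getElem _ _ h]
  rw [List.getElem_drop]

lemma Dvals {L : ℕ} (hL : 5 ≤ L) (s : List ℕ) (x y ζ : ℕ) :
    D1 (s ++ (seg3 x y ζ L).drop 2) = dec3 x y ζ (L-2)
    ∧ D2 (s ++ (seg3 x y ζ L).drop 2) = dec3 x y ζ (L-1) := by
  have hlen : ((seg3 x y ζ L).drop 2).length = L - 2 := by simp [seg3_length]
  have hlen2 : (s ++ (seg3 x y ζ L).drop 2).length = s.length + (L-2) := by simp [hlen]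
  constructor
  · rw [D1, hlen2]
    have h1 : s.length + (L-2) - 2 = s.length + (L-4) := by omega
    rw [h1, List.getD_append_right _ _ _ _ (by omega)]
    have h2 : s.length + (L-4) - s.length = L - 4 := by omega
    rw [h2, getD_drop (by simp [seg3_length]; omega)]
    have h3 : 2 + (L - 4) = L - 2 := by omega
    rw [h3, seg3_getD x y ζ (by omega)]
  · rw [D2, hlen2]
    have h1 : s.length + (L-2) - 1 = s.length + (L-3) := by omega
    rw [h1, List.getD_append_right _ _ _ _ (by omega)]
    have h2 : s.length + (L-3) - s.length = L - 3 := by omega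
    rw [h2, getD_drop (by simp [seg3_length]; omega)]
    have h3 : 2 + (L - 3) = L - 1 := by omega
    rw [h3, seg3_getD x y ζ (by omega)]

lemma sFam_struct {L : ℕ} (hL : 5 ≤ L) : ∀ n, 3 ≤ n →
    (∀ w ∈ sFam L n, w ≤ n) ∧ D1 (sFam L n) ≠ D2 (sFam L n)
    ∧ D1 (sFam L n) ≤ n ∧ D2 (sFam L n) ≤ n := by
  intro n hn
  induction n, hn using Nat.le_induction with
  | base =>
    have h3 : sFam L 3 = seg3 1 2 3 L := rfl
    have hD1 : D1 (sFam L 3) = dec3 1 2 3 (L-2) := by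
      rw [h3, D1, seg3_length, seg3_getD 1 2 3 (by omega)]
    have hD2 : D2 (sFam L 3) = dec3 1 2 3 (L-1) := by
      rw [h3, D2, seg3_length, seg3_getD 1 2 3 (by omega)]
    refine ⟨?_, ?_, ?_, ?_⟩
    · intro w hw
      rw [h3] at hw
      rcases seg3_mem hw with rfl | rfl | rfl <;> omega
    · rw [hD1, hD2]
      exact dec3_ne (by omega) (by omega) (by omega) (by omega)
    · rw [hD1]; rcases dec3_mem 1 2 3 (L-2) with h | h | h <;> omega
    · rw [hD2]; rcases dec3_mem 1 2 3 (L-1) with h | h | h <;> omega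
  | succ n hn ih =>
    obtain ⟨hmem, hne, h1, h2⟩ := ih
    have hn4 : n + 1 = (n - 3) + 4 := by omega
    have hn3 : (n - 3) + 3 = n := by omega
    have hstep : sFam L (n+1) = sFam L n ++ (seg3 (D1 (sFam L n)) (D2 (sFam L n)) (n+1) L).drop 2 := by
      rw [hn4, sFam_succ, hn3, ← hn4]
    have hDv := Dvals hL (sFam L n) (D1 (sFam L n)) (D2 (sFam L n)) (n+1)
    have hd1ne : D1 (sFam L n) ≠ n + 1 := by omega
    have hd2ne : D2 (sFam L n) ≠ n + 1 := by omega
    refine ⟨?_, ?_, ?_, ?_⟩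
    · intro w hw
      rw [hstep] at hw
      rcases List.mem_append.mp hw with hw | hw
      · exact (hmem w hw).trans (by omega)
      · rcases seg3_mem (List.mem_of_mem_drop hw) with rfl | rfl | rfl <;> omega
    · rw [hstep, hDv.1, hDv.2]
      exact dec3_ne hne hd1ne hd2ne (by omega)
    · rw [hstep, hDv.1]
      rcases dec3_mem (D1 (sFam L n)) (D2 (sFam L n)) (n+1) (L-2) with h | h | h <;> omega
    · rw [hstep, hDv.2]
      rcases dec3_mem (D1 (sFam L n)) (D2 (sFam L n)) (n+1) (L-1) with h | h | h <;> omega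

lemma cd_val1 {p q z : ℕ} : cd p q z p = 0 := by simp [cd]
lemma cd_val2 {p q z : ℕ} (h : p ≠ q) : cd p q z q = 1 := by simp [cd, h.symm]
lemma cd_val3 {p q z : ℕ} (h1 : p ≠ z) (h2 : q ≠ z) : cd p q z z = 2 := by
  simp [cd, h1.symm, h2.symm]


lemma getD_map' {A B : Type*} (f : A → B) (l : List A) {i : ℕ} (h : i < l.length) (dA : A) (dB : B) :
    (l.map f).getD i dB = f (l.getD i dA) := by
  rw [List.getD_eq_getElem _ _ (by simpa using h), List.getD_eq_getElem _ _ h, List.getElem_map]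

lemma getD_dropA {A : Type*} (l : List A) {k i : ℕ} (h : k + i < l.length) (dflt : A) :
    (l.drop k).getD i dflt = l.getD (k+i) dflt := by
  rw [List.getD_eq_getElem _ _ (by simp; omega), List.getD_eq_getElem _ _ h, List.getElem_drop]

lemma getD_memA {A : Type*} (l : List A) {i : ℕ} (h : i < l.length) (dflt : A) :
    l.getD i dflt ∈ l := by
  rw [List.getD_eq_getElem _ _ h]; exact List.getElem_mem _

lemma getD_takeA {A : Type*} (l : List A) {m i : ℕ} (h : i < m) (dflt : A) :
    (l.take m).getD i dflt = l.getD i dflt := by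
  rcases Nat.lt_or_ge i l.length with h2 | h2
  · rw [List.getD_eq_getElem _ _ (by simp; omega), List.getD_eq_getElem _ _ h2]
    exact List.getElem_take
  · rw [List.getD_eq_default _ _ (by simp; omega), List.getD_eq_default _ _ h2]

set_option maxHeartbeats 2000000 in
lemma core {α : Type*} [DecidableEq α] (u : List α) (a b c : α)
    (hlen : 6 ≤ u.length) (hab : a ≠ b) (hac : a ≠ c) (hbc : b ≠ c)
    (hletters : u.toFinset = {a, b, c})
    (hfirst : u.take 3 = [a, b, c])
    (hlast : u.drop (u.length - 3) = [a, b, c] ∨ u.drop (u.length - 3) = [b, c, a] ∨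
      u.drop (u.length - 3) = [c, a, b])
    (hf : f1 u a b c + 5 ≤ f0 u a b c)
    (L : ℕ) (hL5 : 5 ≤ L)
    (hW : L ≤ f0 u a b c + 2 * f1 u a b c + 3 * f2c u)
    (p₀ q₀ ζ₀ : ℕ) (hpq : p₀ ≠ q₀) (hpz : p₀ ≠ ζ₀) (hqz : q₀ ≠ ζ₀)
    (d : ℕ) (hd : d ≤ 2) (pre t : List ℕ)
    (f : α → ℕ) (hinj : ∀ x ∈ u, ∀ y ∈ u, f x = f y → x = y)
    (hv : u.map f <+ pre ++ ((seg3 p₀ q₀ ζ₀ L).drop d ++ t))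
    (ht : ∀ w ∈ t, w = dec3 p₀ q₀ ζ₀ (L-2) ∨ w = dec3 p₀ q₀ ζ₀ (L-1))
    (j0 : ℕ) (hj0 : j0 ≤ d) (hpiv : f (u.getD j0 a) ∉ pre) : False := by
  set N := u.length with hN
  set Bd := (seg3 p₀ q₀ ζ₀ L).drop d with hBd
  -- membership facts
  have hau : a ∈ u := by rw [← List.mem_toFinset, hletters]; simp
  have hbu : b ∈ u := by rw [← List.mem_toFinset, hletters]; simp
  have hcu : c ∈ u := by rw [← List.mem_toFinset, hletters]; simp
  have hall : ∀ w ∈ u, w = a ∨ w = b ∨ w = c := by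
    intro w hw
    have : w ∈ u.toFinset := List.mem_toFinset.mpr hw
    rw [hletters] at this
    simpa using this
  have hj02 : j0 ≤ 2 := hj0.trans hd
  -- split over pre
  obtain ⟨w1, w23, hveq, hw1, hw23⟩ := List.sublist_append_iff.mp hv
  have hlenmap : (u.map f).length = N := by simp [hN]
  have hj0N : j0 < N := by omega
  have hugetj0 : u.getD j0 a = u[j0]'(by omega) := List.getD_eq_getElem u a (by omega)
  have hlen1 : w1.length ≤ j0 := by
    by_contra hgt
    push_neg at hgt
    have hj0v : j0 < (u.map f).length := by omega
    have he1 : (u.map f)[j0]'hj0v = w1[j0]'hgt := by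
      have : (u.map f)[j0]'hj0v = (w1 ++ w23)[j0]'(by rw [← hveq]; exact hj0v) := by
        congr 1 <;> rw [hveq]
      rw [this, List.getElem_append_left hgt]
    apply hpiv
    have hmem : (u.map f)[j0]'hj0v ∈ w1 := he1 ▸ List.getElem_mem _
    have : (u.map f)[j0]'hj0v = f (u[j0]'(by omega)) := List.getElem_map f
    rw [hugetj0, ← this]
    exact hw1.subset hmem
  have hvd : (u.map f).drop j0 <+ Bd ++ t := by
    rw [hveq, List.drop_append, List.drop_eq_nil_of_le hlen1, List.nil_append]
    exact (List.drop_sublist _ _).trans hw23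
  obtain ⟨y2, y3, hy, hy2, hy3⟩ := List.sublist_append_iff.mp hvd
  -- letters of f a, f b, f c
  have hlast3sub : (u.drop (N - 3)).map f <+ Bd ++ t := by
    have h1 : (u.drop (N-3)).map f = ((u.map f).drop j0).drop (N-3-j0) := by
      rw [List.drop_drop, ← List.map_drop]
      congr 2
      omega
    rw [h1]
    exact (List.drop_sublist _ _).trans hvd
  have hBdsub : ∀ w ∈ Bd, w = p₀ ∨ w = q₀ ∨ w = ζ₀ := by
    intro w hw
    exact seg3_mem (List.mem_of_mem_drop hw)
  have htsub : ∀ w ∈ t, w = p₀ ∨ w = q₀ ∨ w = ζ₀ := by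
    intro w hw
    rcases ht w hw with rfl | rfl <;> [exact dec3_mem p₀ q₀ ζ₀ (L-2); exact dec3_mem p₀ q₀ ζ₀ (L-1)]
  have hfw : ∀ w, (w = a ∨ w = b ∨ w = c) → (f w = p₀ ∨ f w = q₀ ∨ f w = ζ₀) := by
    intro w hw
    have hwin : w ∈ u.drop (N - 3) := by
      rcases hlast with hl | hl | hl <;> rw [hl] <;> rcases hw with rfl | rfl | rfl <;> simp
    have : f w ∈ Bd ++ t := hlast3sub.subset (List.mem_map_of_mem hwin)
    rcases List.mem_append.mp this with h | h
    · exact hBdsub _ h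
    · exact htsub _ h
  -- codes
  set γ : α → ℕ := fun w => cd p₀ q₀ ζ₀ (f w) with hγ
  have hγlt : ∀ w, γ w < 3 := fun w => cd_lt3 p₀ q₀ ζ₀ (f w)
  have hfab : f a ≠ f b := fun h => hab (hinj a hau b hbu h)
  have hfac : f a ≠ f c := fun h => hac (hinj a hau c hcu h)
  have hfbc : f b ≠ f c := fun h => hbc (hinj b hbu c hcu h)
  have cdinj : ∀ x y : ℕ, (x = p₀ ∨ x = q₀ ∨ x = ζ₀) → (y = p₀ ∨ y = q₀ ∨ y = ζ₀) → x ≠ y →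
      cd p₀ q₀ ζ₀ x ≠ cd p₀ q₀ ζ₀ y := by
    intro x y hx hy hxy
    rcases hx with rfl | rfl | rfl <;> rcases hy with rfl | rfl | rfl <;>
      simp_all [cd_val1, cd_val2 hpq, cd_val3 hpz hqz]
  have hγab : γ a ≠ γ b := cdinj _ _ (hfw a (Or.inl rfl)) (hfw b (Or.inr (Or.inl rfl))) hfab
  have hγac : γ a ≠ γ c := cdinj _ _ (hfw a (Or.inl rfl)) (hfw c (Or.inr (Or.inr rfl))) hfac
  have hγbc : γ b ≠ γ c := cdinj _ _ (hfw b (Or.inr (Or.inl rfl))) (hfw c (Or.inr (Or.inr rfl))) hfbc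
  obtain ⟨A, B, hAB, t1, t2, t3, t4, t5, t6⟩ :=
    orient (γ a) (γ b) (γ c) (hγlt a) (hγlt b) (hγlt c) hγab hγac hγbc
  -- the letter m3 missing from the tail region
  set m3 := dec3 p₀ q₀ ζ₀ L with hm3
  have hm3ne1 : m3 ≠ dec3 p₀ q₀ ζ₀ (L-2) := dec3_ne hpq hpz hqz (by omega)
  have hm3ne2 : m3 ≠ dec3 p₀ q₀ ζ₀ (L-1) := dec3_ne hpq hpz hqz (by omega)
  have hsurj : ∃ w, (w = a ∨ w = b ∨ w = c) ∧ f w = m3 := by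
    have hA := hfw a (Or.inl rfl)
    have hB := hfw b (Or.inr (Or.inl rfl))
    have hC := hfw c (Or.inr (Or.inr rfl))
    have hx := dec3_mem p₀ q₀ ζ₀ L
    rw [← hm3] at hx
    rcases hA with ha' | ha' | ha' <;> rcases hB with hb' | hb' | hb' <;>
      rcases hC with hc' | hc' | hc' <;> rcases hx with h3 | h3 | h3 <;>
      first
        | exact absurd (ha'.trans hb'.symm) hfab
        | exact absurd (ha'.trans hc'.symm) hfac
        | exact absurd (hb'.trans hc'.symm) hfbc
        | exact ⟨a, Or.inl rfl, ha'.trans h3.symm⟩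
        | exact ⟨b, Or.inr (Or.inl rfl), hb'.trans h3.symm⟩
        | exact ⟨c, Or.inr (Or.inr rfl), hc'.trans h3.symm⟩
  obtain ⟨w3, hw3abc, hfw3⟩ := hsurj
  -- choose k : u.drop (N-(k+1)) starts with w3 and back weight = A * k
  have hdrop1 : ∀ (x y z : α), u.drop (N-3) = [x,y,z] → u.drop (N-2) = [y,z] := by
    intro x y z h
    have h' := congrArg (List.drop 1) h
    rw [List.drop_drop] at h'
    rw [show N-3+1 = N-2 from by omega] at h'
    simpa using h'
  have hdrop2 : ∀ (x y z : α), u.drop (N-3) = [x,y,z] → u.drop (N-1) = [z] := by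
    intro x y z h
    have h' := congrArg (List.drop 2) h
    rw [List.drop_drop] at h'
    rw [show N-3+2 = N-1 from by omega] at h'
    simpa using h'
  have hk : ∃ k ≤ 2, ∃ rest, u.drop (N-(k+1)) = w3 :: rest
      ∧ S3 ((u.drop (N-(k+1))).map γ) = A * k := by
    rcases hlast with hl | hl | hl <;> rcases hw3abc with h3 | h3 | h3
    · refine ⟨2, by omega, [b,c], ?_, ?_⟩ <;>
        rw [show N-(2+1) = N-3 from by omega, hl]
      · rw [h3]
      · simp [S3, t1, t2] <;> omega
    · refine ⟨1, by omega, [c], ?_, ?_⟩ <;>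
        rw [show N-(1+1) = N-2 from by omega, hdrop1 a b c hl]
      · rw [h3]
      · simp [S3, t2] <;> omega
    · refine ⟨0, by omega, [], ?_, ?_⟩ <;>
        rw [show N-(0+1) = N-1 from by omega, hdrop2 a b c hl]
      · rw [h3]
      · simp [S3]
    · refine ⟨0, by omega, [], ?_, ?_⟩ <;>
        rw [show N-(0+1) = N-1 from by omega, hdrop2 b c a hl]
      · rw [h3]
      · simp [S3]
    · refine ⟨2, by omega, [c,a], ?_, ?_⟩ <;>
        rw [show N-(2+1) = N-3 from by omega, hl]
      · rw [h3]
      · simp [S3, t2, t3] <;> omega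
    · refine ⟨1, by omega, [a], ?_, ?_⟩ <;>
        rw [show N-(1+1) = N-2 from by omega, hdrop1 b c a hl]
      · rw [h3]
      · simp [S3, t3] <;> omega
    · refine ⟨1, by omega, [b], ?_, ?_⟩ <;>
        rw [show N-(1+1) = N-2 from by omega, hdrop1 c a b hl]
      · rw [h3]
      · simp [S3, t1] <;> omega
    · refine ⟨0, by omega, [], ?_, ?_⟩ <;>
        rw [show N-(0+1) = N-1 from by omega, hdrop2 c a b hl]
      · rw [h3]
      · simp [S3]
    · refine ⟨2, by omega, [a,b], ?_, ?_⟩ <;>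
        rw [show N-(2+1) = N-3 from by omega, hl]
      · rw [h3]
      · simp [S3, t3, t1] <;> omega
  obtain ⟨k, hk2, rest, hdropk, hS3k⟩ := hk
  -- global S3 splitting
  have hNk : N - (k+1) + 1 = N - k := by omega
  have hsp1 : S3 (u.map γ) = S3 ((u.map γ).take (N-k)) + S3 ((u.map γ).drop (N-(k+1))) := by
    have := S3_take_drop (u.map γ) (N-(k+1))
    rwa [hNk] at this
  have hback : S3 ((u.map γ).drop (N-(k+1))) = A * k := by
    rw [← List.map_drop]
    exact hS3k
  set mid := (u.map γ).take (N-k) with hmid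
  have hsp2 : S3 mid = S3 (mid.take (j0+1)) + S3 (mid.drop j0) := S3_take_drop mid j0
  have hmidtake : mid.take (j0+1) = (u.take (j0+1)).map γ := by
    rw [hmid, List.take_take, ← List.map_take]
    congr 2
    omega
  have hufront : u.take (j0+1) = [a,b,c].take (j0+1) := by
    rw [← hfirst, List.take_take]
    congr 1
    omega
  have hfront : S3 (mid.take (j0+1)) = A * j0 := by
    rw [hmidtake, hufront]
    interval_cases j0 <;> simp [S3, t1, t2] <;> omega
  -- u2a and its embedding
  set M := N - k - j0 with hM
  have hM2 : 2 ≤ M := by omega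
  set u2a := (u.drop j0).take M with hu2a
  have hmiddrop : mid.drop j0 = u2a.map γ := by
    rw [hmid, List.drop_take, hu2a, List.map_take, List.map_drop]
  -- the element at position M-1 of (u.map f).drop j0 is m3
  have hEidx : j0 + (M-1) = N - (k+1) := by omega
  have hw3get : u.getD (N-(k+1)) a = w3 := by
    have h3 : (u.drop (N-(k+1))).getD 0 a = u.getD (N-(k+1)+0) a :=
      getD_dropA u (by omega) a
    rw [hdropk] at h3
    simpa using h3.symm
  have hE : ((u.map f).drop j0).getD (M-1) 0 = m3 := by
    rw [getD_dropA (u.map f) (by simp; omega) 0,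
      getD_map' f u (by omega) a 0, hEidx, hw3get, hfw3]
  have hylen : y2.length + y3.length = N - j0 := by
    have h := congrArg List.length hy
    simp at h
    omega
  have hMy2 : M ≤ y2.length := by
    by_contra hlt
    push_neg at hlt
    have he2 : ((u.map f).drop j0).getD (M-1) 0 = y3.getD (M-1-y2.length) 0 := by
      rw [hy, List.getD_append_right _ _ _ _ (by omega)]
    have hm3t : m3 ∈ t := by
      have : m3 ∈ y3 := by
        rw [← hE, he2]
        exact getD_memA y3 (by omega) 0
      exact hy3.subset this
    rcases ht m3 hm3t with h | h
    · exact hm3ne1 h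
    · exact hm3ne2 h
  have hu2amap : u2a.map f = ((u.map f).drop j0).take M := by
    rw [hu2a, List.map_take, List.map_drop]
  have hv2a : u2a.map f <+ Bd := by
    have h2 : ((u.map f).drop j0).take M = y2.take M := by
      rw [hy, List.take_append_of_le_length hMy2]
    rw [hu2amap, h2]
    exact (List.take_sublist _ _).trans hy2
  -- coded embedding
  have hBdmap : Bd = (List.range' d (L - d)).map (dec3 p₀ q₀ ζ₀) := seg3_drop p₀ q₀ ζ₀ L d
  obtain ⟨idxs, hidxs, hv2aeq⟩ := List.sublist_map_iff.mp (hBdmap ▸ hv2a)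
  have hcddec : (fun i => cd p₀ q₀ ζ₀ (dec3 p₀ q₀ ζ₀ i)) = (fun i => i % 3) :=
    funext (cd_dec3 hpq hpz hqz)
  have hcodes : u2a.map γ = idxs.map (· % 3) := by
    have h1 : u2a.map γ = (u2a.map f).map (cd p₀ q₀ ζ₀) := by
      rw [List.map_map]; rfl
    rw [h1, hv2aeq, List.map_map]
    exact List.map_congr_left (fun i _ => cd_dec3 hpq hpz hqz i)
  have hu2alen : (u2a.map f).length = M := by
    rw [hu2amap]
    simp
    omega
  have hidxlen : idxs.length = M := by
    have h1 := congrArg List.length hv2aeq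
    rw [hu2alen] at h1
    simpa using h1.symm
  -- last index is ≡ L mod 3
  have hlastidx : idxs.getD (M-1) 0 % 3 = L % 3 := by
    have h1 : (idxs.map (dec3 p₀ q₀ ζ₀)).getD (M-1) 0 = dec3 p₀ q₀ ζ₀ (idxs.getD (M-1) 0) :=
      getD_map' _ idxs (by omega) 0 0
    have h3 : (u2a.map f).getD (M-1) 0 = m3 := by
      rw [hu2amap, getD_takeA _ (by omega) 0, hE]
    rw [hv2aeq, h1] at h3
    have h5 := congrArg (cd p₀ q₀ ζ₀) h3
    rw [cd_dec3 hpq hpz hqz, hm3, cd_dec3 hpq hpz hqz] at h5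
    exact h5
  -- truncate the last two positions
  have hidxs2 : idxs <+ List.range' d (L - 2 - d) := by
    have hsplit : List.range' d (L - d) = List.range' d (L-2-d) ++ List.range' (L-2) 2 := by
      have h := List.range'_append (s := d) (m := L-2-d) (n := 2) (step := 1)
      rw [show d + 1 * (L-2-d) = L-2 from by omega] at h
      rw [show (L-2-d) + 2 = L - d from by omega] at h
      exact h.symm
    rw [hsplit] at hidxs
    obtain ⟨i1, i2, hie, hi1, hi2⟩ := List.sublist_append_iff.mp hidxs
    have hi2nil : i2 = [] := by
      by_contra hne
      have hi2len : 1 ≤ i2.length := by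
        cases i2
        · exact absurd rfl hne
        · simp
      have hi1len : i1.length + i2.length = M := by
        have h := congrArg List.length hie
        rw [hidxlen] at h
        simp at h
        omega
      have hlast2 : idxs.getD (M-1) 0 = i2.getD (M-1-i1.length) 0 := by
        rw [hie, List.getD_append_right _ _ _ _ (by omega)]
      have hmem2 : idxs.getD (M-1) 0 ∈ i2 := by
        rw [hlast2]
        exact getD_memA i2 (by omega) 0
      have hmemr : idxs.getD (M-1) 0 ∈ List.range' (L-2) 2 := hi2.subset hmem2
      have hmemr2 : idxs.getD (M-1) 0 ∈ [L-2, L-1] := by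
        have : List.range' (L-2) 2 = [L-2, L-1] := by
          simp [List.range'_succ]
          omega
        rwa [this] at hmemr
      simp only [List.mem_cons, List.mem_singleton, List.not_mem_nil, or_false] at hmemr2
      rcases hmemr2 with h | h <;> rw [h] at hlastidx <;> omega
    rw [hi2nil, List.append_nil] at hie
    rw [hie]
    exact hi1
  -- apply greedy bound
  have hR1 : req d (idxs.map (· % 3)) ≤ d + (L - 2 - d) :=
    R1coded (L-2-d) d _ (List.Sublist.map _ hidxs2)
  have hdL : d + (L - 2 - d) = L - 2 := by omega
  -- req lower bound via S3
  have hu2ane : u2a.map γ ≠ [] := by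
    have : (u2a.map γ).length = M := by simp [hu2a]; omega
    intro h
    rw [h] at this
    simp at this
    omega
  obtain ⟨c0, cs0, hcons⟩ : ∃ c0 cs0, u2a.map γ = c0 :: cs0 := by
    cases h : u2a.map γ with
    | nil => exact absurd h hu2ane
    | cons c0 cs0 => exact ⟨c0, cs0, rfl⟩
  have hc0lt : c0 < 3 := by
    have : c0 ∈ u2a.map γ := by rw [hcons]; simp
    obtain ⟨w, _, rfl⟩ := List.mem_map.mp this
    exact hγlt w
  have hcs0lt : ∀ x ∈ cs0, x < 3 := by
    intro x hx
    have : x ∈ u2a.map γ := by rw [hcons]; simp [hx]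
    obtain ⟨w, _, rfl⟩ := List.mem_map.mp this
    exact hγlt w
  have hreq : req d (u2a.map γ) = pos3 d c0 + 1 + S3 (u2a.map γ) := by
    rw [hcons]
    exact req_eq_S cs0 c0 d hc0lt hcs0lt
  have hS3le : S3 (u2a.map γ) ≤ L - 3 - d := by
    have h1 : req d (u2a.map γ) ≤ L - 2 := by
      rw [hcodes]
      omega
    have h2 : d ≤ pos3 d c0 := pos3_ge d c0
    omega
  -- count identity
  have hcount : S3 (u.map γ) = A * f0 u a b c + B * f1 u a b c + 3 * f2c u :=
    S3_count a b c hab hac hbc γ A B t1 t2 t3 t4 t5 t6 u hall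
  -- final contradiction
  have htotal : A * f0 u a b c + B * f1 u a b c + 3 * f2c u
      = A * j0 + S3 (u2a.map γ) + A * k := by
    rw [← hcount, hsp1, hback, hsp2, hfront, hmiddrop]
  have hLd : 3 + d ≤ L := by omega
  rcases hAB with ⟨hA, hB⟩ | ⟨hA, hB⟩ <;> rw [hA, hB] at htotal <;> omega

set_option maxHeartbeats 1000000 in
lemma main_lemma {α : Type*} [DecidableEq α] (u : List α) (a b c : α)
    (hlen : 6 ≤ u.length) (hab : a ≠ b) (hac : a ≠ c) (hbc : b ≠ c)
    (hletters : u.toFinset = {a, b, c})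
    (hfirst : u.take 3 = [a, b, c])
    (hlast : u.drop (u.length - 3) = [a, b, c] ∨ u.drop (u.length - 3) = [b, c, a] ∨
      u.drop (u.length - 3) = [c, a, b])
    (hf : f1 u a b c + 5 ≤ f0 u a b c)
    (L : ℕ) (hL5 : 5 ≤ L)
    (hW : L ≤ f0 u a b c + 2 * f1 u a b c + 3 * f2c u) :
    ∀ n, 3 ≤ n → ∀ t : List ℕ, (∀ w ∈ t, w = D1 (sFam L n) ∨ w = D2 (sFam L n)) →
      ¬ ContainsCopy (sFam L n ++ t) u := by
  have hall : ∀ w ∈ u, w = a ∨ w = b ∨ w = c := by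
    intro w hw
    have : w ∈ u.toFinset := List.mem_toFinset.mpr hw
    rw [hletters] at this
    simpa using this
  have hgetD : ∀ j0 ≤ 2, u.getD j0 a = [a,b,c].getD j0 a := by
    intro j0 hj0
    rw [← hfirst, getD_takeA u (by omega) a]
  intro n hn
  induction n, hn using Nat.le_induction with
  | base =>
    intro t htl hcc
    obtain ⟨v, hsub, f, hinj, hveq⟩ := hcc
    subst hveq
    have h3 : sFam L 3 = seg3 1 2 3 L := rfl
    have hD1 : D1 (sFam L 3) = dec3 1 2 3 (L-2) := by
      rw [h3, D1, seg3_length, seg3_getD 1 2 3 (by omega)]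
    have hD2 : D2 (sFam L 3) = dec3 1 2 3 (L-1) := by
      rw [h3, D2, seg3_length, seg3_getD 1 2 3 (by omega)]
    refine core u a b c hlen hab hac hbc hletters hfirst hlast hf L hL5 hW
      1 2 3 (by omega) (by omega) (by omega) 0 (by omega) [] t f hinj ?_ ?_ 0 (le_refl 0)
      (by simp)
    · simpa [h3] using hsub
    · intro w hw
      rcases htl w hw with h | h
      · left; rw [← hD1]; exact h
      · right; rw [← hD2]; exact h
  | succ n hn ih =>
    intro t htl hcc
    obtain ⟨hmem, hne, hd1, hd2⟩ := sFam_struct hL5 n hn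
    have hn4 : n + 1 = (n - 3) + 4 := by omega
    have hn3 : (n - 3) + 3 = n := by omega
    have hstep : sFam L (n+1)
        = sFam L n ++ (seg3 (D1 (sFam L n)) (D2 (sFam L n)) (n+1) L).drop 2 := by
      rw [hn4, sFam_succ, hn3, ← hn4]
    have hD1' : D1 (sFam L (n+1)) = dec3 (D1 (sFam L n)) (D2 (sFam L n)) (n+1) (L-2) := by
      rw [hstep]
      exact (Dvals hL5 _ _ _ _).1
    have hD2' : D2 (sFam L (n+1)) = dec3 (D1 (sFam L n)) (D2 (sFam L n)) (n+1) (L-1) := by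
      rw [hstep]
      exact (Dvals hL5 _ _ _ _).2
    obtain ⟨v, hsub, f, hinj, hveq⟩ := hcc
    subst hveq
    rw [hstep, List.append_assoc] at hsub
    by_cases hcase : ∃ w ∈ u, f w = n+1
    · obtain ⟨w0, hw0u, hfw0⟩ := hcase
      obtain ⟨j0, hj02, hj0get⟩ : ∃ j0 ≤ 2, u.getD j0 a = w0 := by
        rcases hall w0 hw0u with rfl | rfl | rfl
        · exact ⟨0, by omega, by rw [hgetD 0 (by omega)]; rfl⟩
        · exact ⟨1, by omega, by rw [hgetD 1 (by omega)]; rfl⟩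
        · exact ⟨2, by omega, by rw [hgetD 2 (by omega)]; rfl⟩
      refine core u a b c hlen hab hac hbc hletters hfirst hlast hf L hL5 hW
        (D1 (sFam L n)) (D2 (sFam L n)) (n+1) hne (by omega) (by omega) 2 (le_refl 2)
        (sFam L n) t f hinj hsub ?_ j0 hj02 ?_
      · intro w hw
        rcases htl w hw with h | h
        · left; rw [← hD1']; exact h
        · right; rw [← hD2']; exact h
      · rw [hj0get, hfw0]
        intro hmem2
        have := hmem _ hmem2
        omega
    · -- the copy avoids the letter n+1 : reduce to sFam L n
      set pny : ℕ → Bool := fun w => decide (w ≠ n+1) with hpny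
      have hfilter_v : (u.map f).filter pny = u.map f := by
        rw [List.filter_eq_self]
        intro w hw
        obtain ⟨x', hx', rfl⟩ := List.mem_map.mp hw
        simp [hpny]
        exact fun h => hcase ⟨x', hx', h⟩
      have hfilter_s : (sFam L n).filter pny = sFam L n := by
        rw [List.filter_eq_self]
        intro w hw
        have := hmem w hw
        simp [hpny]
        omega
      have hsub2 := hsub.filter pny
      rw [hfilter_v, List.filter_append, List.filter_append, hfilter_s] at hsub2
      refine ih (((seg3 (D1 (sFam L n)) (D2 (sFam L n)) (n+1) L).drop 2).filter pny ++ t.filter pny) ?_ ⟨u.map f, ?_, f, hinj, rfl⟩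
      · intro w hw
        rcases List.mem_append.mp hw with hw | hw
        · have hw1 := List.mem_filter.mp hw
          have hw2 := seg3_mem (List.mem_of_mem_drop hw1.1)
          have hw3 : w ≠ n+1 := by simpa [hpny] using hw1.2
          rcases hw2 with h | h | h
          · left; exact h
          · right; exact h
          · exact absurd h hw3
        · have hw1 := List.mem_filter.mp hw
          have hw3 : w ≠ n+1 := by simpa [hpny] using hw1.2
          rcases htl w hw1.1 with h | h
          · rw [hD1'] at h
            rcases dec3_mem (D1 (sFam L n)) (D2 (sFam L n)) (n+1) (L-2) with h2 | h2 | h2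
            · left; exact h.trans h2
            · right; exact h.trans h2
            · exact absurd (h.trans h2) hw3
          · rw [hD2'] at h
            rcases dec3_mem (D1 (sFam L n)) (D2 (sFam L n)) (n+1) (L-1) with h2 | h2 | h2
            · left; exact h.trans h2
            · right; exact h.trans h2
            · exact absurd (h.trans h2) hw3
      · exact hsub2

set_option maxHeartbeats 1000000 in
lemma derive_hW {α : Type*} [DecidableEq α] (u : List α) (a b c : α)
    (hlen : 6 ≤ u.length) (hab : a ≠ b) (hac : a ≠ c) (hbc : b ≠ c)
    (hletters : u.toFinset = {a, b, c})
    (hfirst : u.take 3 = [a, b, c])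
    (L : ℕ)
    (havoid : ¬ ContainsCopy (seg3 1 2 3 L) u) :
    L ≤ f0 u a b c + 2 * f1 u a b c + 3 * f2c u := by
  by_contra hlt
  push_neg at hlt
  apply havoid
  have hall : ∀ w ∈ u, w = a ∨ w = b ∨ w = c := by
    intro w hw
    have : w ∈ u.toFinset := List.mem_toFinset.mpr hw
    rw [hletters] at this
    simpa using this
  set γ0 : α → ℕ := fun w => if w = a then 0 else if w = b then 1 else 2 with hγ0
  have hγ0a : γ0 a = 0 := by simp [hγ0]
  have hγ0b : γ0 b = 1 := by simp [hγ0, hab.symm]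
  have hγ0c : γ0 c = 2 := by simp [hγ0, hac.symm, hbc.symm]
  set cs := u.map γ0 with hcs
  have hcs3 : ∀ x ∈ cs, x < 3 := by
    intro x hx
    obtain ⟨w, _, rfl⟩ := List.mem_map.mp hx
    simp only [hγ0]
    split <;> [omega; split <;> omega]
  have hsubc := R2coded cs hcs3 0
  -- identify u's head
  have hu3 : u = a :: b :: c :: u.drop 3 := by
    have h := List.take_append_drop 3 u
    rw [hfirst] at h
    exact h.symm
  have hScount : S3 cs = 1 * f0 u a b c + 2 * f1 u a b c + 3 * f2c u := by
    refine S3_count a b c hab hac hbc γ0 1 2 ?_ ?_ ?_ ?_ ?_ ?_ u hall <;>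
      simp [hγ0, stp, hab.symm, hac.symm, hbc.symm]
  have hreqval : req 0 cs = 1 + S3 cs := by
    have hcseq : cs = 0 :: (b :: c :: u.drop 3).map γ0 := by
      rw [hcs]
      conv_lhs => rw [hu3]
      rw [List.map_cons, hγ0a]
    rw [hcseq, req_eq_S _ _ _ (by omega)
      (fun x hx => by
        obtain ⟨w, _, rfl⟩ := List.mem_map.mp hx
        simp only [hγ0]
        split
        · omega
        · split <;> omega), ← hcseq]
    have : pos3 0 0 = 0 := by simp [pos3]
    omega
  have hle : req 0 cs ≤ L := by
    rw [hreqval, hScount]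
    omega
  -- monotone extension of the range
  have hsubc2 : cs <+ (List.range' 0 L).map (· % 3) := by
    have h1 : List.range' 0 (req 0 cs - 0) ++ List.range' (req 0 cs) (L - req 0 cs)
        = List.range' 0 L := by
      have h := List.range'_append (s := 0) (m := req 0 cs) (n := L - req 0 cs) (step := 1)
      simp only [Nat.one_mul, Nat.zero_add] at h
      rw [show req 0 cs + (L - req 0 cs) = L from by omega] at h
      simpa using h
    calc cs <+ (List.range' 0 (req 0 cs - 0)).map (· % 3) := hsubc
      _ <+ (List.range' 0 L).map (· % 3) := by
          rw [← h1, List.map_append]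
          exact List.sublist_append_left _ _
  -- transport to letters 1 2 3
  set fc : α → ℕ := fun w => if w = a then 1 else if w = b then 2 else 3 with hfc
  have hmapeq : u.map fc = cs.map (dec3 1 2 3) := by
    rw [hcs, List.map_map]
    refine List.map_congr_left ?_
    intro w hw
    rcases hall w hw with rfl | rfl | rfl
    · simp [hfc, hγ0, dec3]
    · simp [hfc, hγ0, hab.symm, dec3]
    · simp [hfc, hγ0, hac.symm, hbc.symm, dec3]
  have hseg : seg3 1 2 3 L = ((List.range' 0 L).map (· % 3)).map (dec3 1 2 3) := by
    rw [seg3_eq_map, List.range_eq_range', List.map_map]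
    exact List.map_congr_left (fun i _ => (dec3_mod 1 2 3 i).symm)
  refine ⟨u.map fc, ?_, fc, ?_, rfl⟩
  · rw [hmapeq, hseg]
    exact hsubc2.map _
  · have hfca : fc a = 1 := by simp [hfc]
    have hfcb : fc b = 2 := by simp [hfc, hab.symm]
    have hfcc : fc c = 3 := by simp [hfc, hac.symm, hbc.symm]
    intro x hx y hy hxy
    rcases hall x hx with rfl | rfl | rfl <;> rcases hall y hy with rfl | rfl | rfl <;>
      simp only [hfca, hfcb, hfcc] at hxy <;> first | rfl | exact absurd hxy (by decide)

end APx

theorem stmt12 {α : Type*} [DecidableEq α] (u : List α) (a b c : α)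
    (hlen : 6 ≤ u.length)
    (hab : a ≠ b) (hac : a ≠ c) (hbc : b ≠ c)
    (hletters : u.toFinset = {a, b, c})
    (hfirst : u.take 3 = [a, b, c])
    (hlast : u.drop (u.length - 3) = [a, b, c] ∨ u.drop (u.length - 3) = [b, c, a] ∨
      u.drop (u.length - 3) = [c, a, b])
    (hf : f1 u a b c + 5 ≤ f0 u a b c)
    (L : ℕ)
    -- `L` is the length of `s₃(u)`, the longest initial segment of `1,2,3,1,2,3,…`
    -- avoiding `u`:
    (havoid : ¬ ContainsCopy (seg3 1 2 3 L) u)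
    (hmax : ContainsCopy (seg3 1 2 3 (L + 1)) u) :
    ∀ n : ℕ, 3 ≤ n → ¬ ContainsCopy (sFam L n) u := by

  have hL5 : 5 ≤ L := by
    obtain ⟨v0, hsub0, f0', _, hveq0⟩ := hmax
    have h1 : v0.length = u.length := by rw [hveq0]; simp
    have h2 := hsub0.length_le
    rw [APx.seg3_length] at h2
    omega
  have hW := APx.derive_hW u a b c hlen hab hac hbc hletters hfirst L havoid
  intro n hn hcc
  refine APx.main_lemma u a b c hlen hab hac hbc hletters hfirst hlast hf L hL5 hW
    n hn [] (by simp) ?_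
  simpa using hcc
end

section
/- Let u be a sequence of length at least 6 with exactly three distinct letters, whose first three letters a, b, c are pairwise distinct, and whose last three letters form a permutation of {a,b,c}. Then for every integer n ≥ 3, the sequence s[n] over the alphabet {1,…,n} is u-semisaturated. -/
/-- `s` is `u`-semisaturated over `alphabet`: like saturation, but `s` itself is allowed
to contain a copy of `u`. -/
def Semisaturated {α A : Type*} [DecidableEq α] (u : List α) (s : List A)
    (alphabet : Set A) : Prop :=
  Sparse u.toFinset.card s ∧ (∀ x ∈ s, x ∈ alphabet) ∧
  ∀ x ∈ alphabet, ∀ i ≤ s.length,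
    ¬ Sparse u.toFinset.card (s.insertIdx i x) ∨ ContainsCopy (s.insertIdx i x) u

namespace Work

/-- the periodic pattern function -/
def pat (p q z : ℕ) (i : ℕ) : ℕ := if i % 3 = 0 then p else if i % 3 = 1 then q else z

/-- total indexing with default 0 -/
def el (s : List ℕ) (i : ℕ) : ℕ := s.getD i 0

theorem seg3_eq (p q r len : ℕ) : seg3 p q r len = (List.range len).map (pat p q r) := rfl

@[simp] theorem length_seg3 {A : Type*} (p q r : A) (len : ℕ) : (seg3 p q r len).length = len := by
  simp [seg3]

theorem el_seg3 (p q r len i : ℕ) (h : i < len) : el (seg3 p q r len) i = pat p q r i := by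
  rw [el, seg3_eq, List.getD_eq_getElem _ _ (by simpa using h)]
  simp

theorem el_eq_getElem (s : List ℕ) (i : ℕ) (h : i < s.length) : el s i = s[i] :=
  List.getD_eq_getElem _ _ h

theorem el_eq_get (s : List ℕ) (i : ℕ) (h : i < s.length) : el s i = s.get ⟨i, h⟩ :=
  List.getD_eq_getElem _ _ h

theorem el_append_left (a b : List ℕ) (i : ℕ) (h : i < a.length) : el (a ++ b) i = el a i :=
  List.getD_append _ _ _ _ h

theorem el_append_right (a b : List ℕ) (i : ℕ) (h : a.length ≤ i) :
    el (a ++ b) i = el b (i - a.length) :=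
  List.getD_append_right _ _ _ _ h

theorem el_take (s : List ℕ) (g i : ℕ) (h : i < g) : el (s.take g) i = el s i := by
  rw [el, el, List.getD_eq_getElem?_getD, List.getD_eq_getElem?_getD, List.getElem?_take]
  simp [h]

theorem el_drop (s : List ℕ) (d i : ℕ) : el (s.drop d) i = el s (d + i) := by
  rw [el, el, List.getD_eq_getElem?_getD, List.getD_eq_getElem?_getD, List.getElem?_drop]

theorem el_cons_succ (x : ℕ) (l : List ℕ) (i : ℕ) : el (x :: l) (i+1) = el l i := rfl

theorem el_cons_zero (x : ℕ) (l : List ℕ) : el (x :: l) 0 = x := rfl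

/-- pat only depends on i % 3 -/
theorem pat_mod (p q r i : ℕ) : pat p q r i = pat p q r (i % 3) := by
  simp [pat, Nat.mod_mod_of_dvd]

theorem pat_congr (p q r i j : ℕ) (h : i % 3 = j % 3) : pat p q r i = pat p q r j := by
  simp [pat, h]

theorem pat_mem (p q r i : ℕ) : pat p q r i = p ∨ pat p q r i = q ∨ pat p q r i = r := by
  unfold pat; split_ifs <;> tauto

theorem pat_ne (p q r : ℕ) (hpq : p ≠ q) (hpr : p ≠ r) (hqr : q ≠ r) {i j : ℕ}
    (hij : i < j) (hj : j < i + 3) : pat p q r i ≠ pat p q r j := by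
  have h1 : i % 3 = 0 ∨ i % 3 = 1 ∨ i % 3 = 2 := by omega
  have h2 : j % 3 = 0 ∨ j % 3 = 1 ∨ j % 3 = 2 := by omega
  rcases h1 with h1|h1|h1 <;> rcases h2 with h2|h2|h2 <;>
    simp [pat, h1, h2, hpq, hpr, hqr, hpq.symm, hpr.symm, hqr.symm] <;> omega

theorem pat_inj (p q r : ℕ) (hpq : p ≠ q) (hpr : p ≠ r) (hqr : q ≠ r) {i j : ℕ}
    (h : pat p q r i = pat p q r j) : i % 3 = j % 3 := by
  have h1 : i % 3 = 0 ∨ i % 3 = 1 ∨ i % 3 = 2 := by omega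
  have h2 : j % 3 = 0 ∨ j % 3 = 1 ∨ j % 3 = 2 := by omega
  rcases h1 with h1|h1|h1 <;> rcases h2 with h2|h2|h2 <;>
    simp_all [pat, h1, h2]

theorem seg3_succ_last (p q r k : ℕ) : seg3 p q r (k+1) = seg3 p q r k ++ [pat p q r k] := by
  rw [seg3_eq, seg3_eq, (show List.range (k+1) = List.range k ++ [k] by simpa using List.range_succ (n := k))]
  simp

theorem pat_shift (p q r i : ℕ) : pat p q r (i + 1) = pat q r p i := by
  have h1 : i % 3 = 0 ∨ i % 3 = 1 ∨ i % 3 = 2 := by omega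
  rcases h1 with h1|h1|h1 <;>
    · have h2 : (i+1) % 3 = (i % 3 + 1) % 3 := by omega
      simp [pat, h1, h2]

theorem seg3_rot (p q r k : ℕ) : seg3 p q r (k+1) = p :: seg3 q r p k := by
  rw [seg3_eq, seg3_eq, (show
    List.range (k+1) = 0 :: (List.range k).map Nat.succ by simpa using List.range_succ_eq_map (n := k))]
  simp only [List.map_cons, List.map_map]
  refine congrArg₂ _ (by simp [pat]) (List.map_congr_left fun i _ => ?_)
  exact pat_shift p q r i



/-- composing copies -/
theorem contains_trans {α : Type*} {u : List α} {P Q t : List ℕ}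
    (h1 : ContainsCopy P u) (h2 : IsCopy Q P) (h3 : Q.Sublist t) : ContainsCopy t u := by
  obtain ⟨v, hvP, f, hf, hv⟩ := h1
  obtain ⟨g, hg, hQ⟩ := h2
  refine ⟨v.map g, ?_, fun x => g (f x), ?_, ?_⟩
  · exact (hQ ▸ hvP.map g).trans h3
  · intro x hx y hy hxy
    exact hf x hx y hy (hg _ (hvP.subset (hv ▸ List.mem_map_of_mem (f := f) hx))
      _ (hvP.subset (hv ▸ List.mem_map_of_mem (f := f) hy)) hxy)
  · rw [hv, List.map_map]; rfl

theorem isCopy_seg3 {p q r : ℕ} (k : ℕ) (hpq : p ≠ q) (hpr : p ≠ r) (hqr : q ≠ r) :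
    IsCopy (seg3 p q r k) (seg3 1 2 3 k) := by
  refine ⟨fun v => if v = 1 then p else if v = 2 then q else r, ?_, ?_⟩
  · intro x hx y hy hxy
    rw [seg3_eq, List.mem_map] at hx hy
    obtain ⟨i, -, hi⟩ := hx
    obtain ⟨j, -, hj⟩ := hy
    have h1 : x = 1 ∨ x = 2 ∨ x = 3 := by rcases pat_mem 1 2 3 i with h|h|h <;> simp [← hi, h]
    have h2 : y = 1 ∨ y = 2 ∨ y = 3 := by rcases pat_mem 1 2 3 j with h|h|h <;> simp [← hj, h]
    rcases h1 with h|h|h <;> rcases h2 with h'|h'|h' <;>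
      simp_all
  · rw [seg3_eq, seg3_eq, List.map_map]
    refine List.map_congr_left fun i _ => ?_
    rcases (show i % 3 = 0 ∨ i % 3 = 1 ∨ i % 3 = 2 by omega) with h|h|h <;>
      simp [pat, Function.comp, h]

theorem length_le_of_containsCopy {α : Type*} {u : List α} {s : List ℕ}
    (h : ContainsCopy s u) : u.length ≤ s.length := by
  obtain ⟨v, hv, f, -, rfl⟩ := h
  simpa using hv.length_le

theorem insertIdx_eq (m : ℕ) : ∀ (g : ℕ) (s : List ℕ), g ≤ s.length →
    s.insertIdx g m = s.take g ++ m :: s.drop g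
  | 0, s, _ => by simp [List.insertIdx_zero]
  | (g+1), [], h => by simp at h
  | (g+1), (x :: s), h => by
    rw [List.insertIdx_succ_cons, insertIdx_eq m g s (by simpa using h)]
    simp

/-- pattern occurring at consecutive positions gives a sublist -/
theorem pattern_sublist (s : List ℕ) (f : ℕ → ℕ) (D K : ℕ) (hDK : D + K ≤ s.length)
    (h : ∀ i < K, el s (D + i) = f i) : ((List.range K).map f).Sublist (s.drop D) := by
  have hlen : ((s.drop D).take K).length = K := by
    rw [List.length_take, List.length_drop]; omega
  have : (List.range K).map f = (s.drop D).take K := by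
    refine List.ext_getElem (by simpa using hlen.symm) fun i h1 h2 => ?_
    have hiK : i < K := by simpa using h1
    have : el ((s.drop D).take K) i = el s (D + i) := by
      rw [el_take _ _ _ hiK, el_drop]
    rw [← el_eq_getElem _ _ h2, this, h i hiK]
    simp [hiK]
  rw [this]
  exact List.take_sublist _ _

theorem sparse_iff_el (s : List ℕ) : Sparse 3 s ↔
    (∀ i j, i < j → j < i + 3 → j < s.length → el s i ≠ el s j) := by
  constructor
  · intro hs i j hij h3 hj
    rw [el_eq_get _ _ (hij.trans hj), el_eq_get _ _ hj]
    exact hs i j hij hj h3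
  · intro hs i j hij hj h3
    rw [← el_eq_get _ _ (hij.trans hj), ← el_eq_get _ _ hj]
    exact hs i j hij h3 hj

/-- The main structural invariant of the family `s[n]`. -/
structure Inv (L n : ℕ) (s : List ℕ) : Prop where
  hlen : s.length = L + (n-3)*(L-2)
  sparse : ∀ i j, i < j → j < i + 3 → j < s.length → el s i ≠ el s j
  mem : ∀ i < s.length, 1 ≤ el s i ∧ el s i ≤ n
  pre : ∀ i < L, el s i = pat 1 2 3 i
  spacing : ∀ i j, i < j → j < s.length → el s i = el s j → el s (i+3) = el s i ∧ i + 3 ≤ j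
  occurs : ∀ m, 1 ≤ m → m ≤ n → ∃ i, i < s.length ∧ el s i = m
  blockR : ∀ m, 3 ≤ m → m ≤ n → ∃ S x y, x ≠ y ∧ x ≠ m ∧ y ≠ m ∧ S + L ≤ s.length ∧
      (∀ i < L, el s (S + i) = pat x y m i) ∧ (∀ idx < S + 2, el s idx ≠ m)
  lastocc : ∀ m, 1 ≤ m → m ≤ n → ∃ l, l < s.length ∧ el s l = m ∧
      (∀ idx, l < idx → idx < s.length → el s idx ≠ m) ∧
      (l + 3 ≤ s.length → ∃ p q r, p ≠ q ∧ p ≠ r ∧ q ≠ r ∧ L ≤ l + 3 ∧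
        (∀ i < L, el s (l + 3 - L + i) = pat p q r i) ∧ pat p q r L = m)
  suffixblk : ∃ p q r, p ≠ q ∧ p ≠ r ∧ q ≠ r ∧ 1 ≤ p ∧ p ≤ n ∧ 1 ≤ q ∧ q ≤ n ∧ 1 ≤ r ∧ r ≤ n ∧
      L ≤ s.length ∧ (∀ i < L, el s (s.length - L + i) = pat p q r i)

/-- the `lastocc` conclusion for any letter of a periodic suffix block -/
theorem lastocc_of_suffix (L : ℕ) (hL : 5 ≤ L) (s : List ℕ) (x y z : ℕ)
    (hxy : x ≠ y) (hxz : x ≠ z) (hyz : y ≠ z) (hLlen : L ≤ s.length)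
    (hsuf : ∀ i < L, el s (s.length - L + i) = pat x y z i) (φ : ℕ) (hφ : φ < 3) :
    ∃ l, l < s.length ∧ el s l = pat x y z φ ∧
      (∀ idx, l < idx → idx < s.length → el s idx ≠ pat x y z φ) ∧
      (l + 3 ≤ s.length → ∃ p q r, p ≠ q ∧ p ≠ r ∧ q ≠ r ∧ L ≤ l + 3 ∧
        (∀ i < L, el s (l + 3 - L + i) = pat p q r i) ∧ pat p q r L = pat x y z φ) := by
  set len := s.length with hlen
  set W := len - L with hW
  set c := (L - 1 - φ) % 3 with hc
  set i' := L - 1 - c with hi'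
  have key : i' < L ∧ L ≤ i' + 3 ∧ i' % 3 = φ := by omega
  refine ⟨W + i', by omega, ?_, ?_, ?_⟩
  · rw [hsuf i' key.1]; exact pat_congr _ _ _ _ _ (by omega)
  · intro idx hlt hidx
    have hidx' : idx = W + (idx - W) := by omega
    have h1 : i' < idx - W := by omega
    have h2 : idx - W < L := by omega
    rw [hidx', hsuf _ h2]
    intro hcon
    have := pat_inj x y z hxy hxz hyz hcon
    omega
  · intro h3
    have hiL : i' + 3 = L := by omega
    refine ⟨x, y, z, hxy, hxz, hyz, by omega, ?_, ?_⟩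
    · intro i hi
      rw [show W + i' + 3 - L + i = W + i by omega]
      exact hsuf i hi
    · exact pat_congr _ _ _ _ _ (by omega)

theorem inv_base (L : ℕ) (hL : 5 ≤ L) : Inv L 3 (seg3 1 2 3 L) := by
  have hlen : (seg3 1 2 3 L).length = L := by simp
  have hel : ∀ i < L, el (seg3 1 2 3 L) i = pat 1 2 3 i := fun i hi => el_seg3 1 2 3 L i hi
  have h12 : (1:ℕ) ≠ 2 := by omega
  have h13 : (1:ℕ) ≠ 3 := by omega
  have h23 : (2:ℕ) ≠ 3 := by omega
  constructor
  · omega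
  · intro i j hij h3 hj
    rw [hlen] at hj
    rw [hel i (by omega), hel j hj]
    exact pat_ne 1 2 3 h12 h13 h23 hij h3
  · intro i hi
    rw [hlen] at hi
    rw [hel i hi]
    rcases pat_mem 1 2 3 i with h|h|h <;> omega
  · exact hel
  · intro i j hij hj heq
    rw [hlen] at hj
    rw [hel i (by omega), hel j hj] at heq
    have hmod := pat_inj 1 2 3 h12 h13 h23 heq
    have h3j : i + 3 ≤ j := by omega
    refine ⟨?_, h3j⟩
    rw [hel i (by omega), hel (i+3) (by omega)]
    exact pat_congr _ _ _ _ _ (by omega)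
  · intro m h1 h3
    refine ⟨m - 1, by omega, ?_⟩
    rw [hel (m-1) (by omega)]
    interval_cases m <;> simp [pat]
  · intro m h3m hm3
    have hm : m = 3 := by omega
    subst hm
    refine ⟨0, 1, 2, h12, h13, h23, by omega, ?_, ?_⟩
    · intro i hi; rw [Nat.zero_add]; exact hel i hi
    · intro idx hidx
      rw [hel idx (by omega)]
      interval_cases idx <;> simp [pat]
  · intro m h1 h3
    have h := lastocc_of_suffix L hL (seg3 1 2 3 L) 1 2 3 h12 h13 h23 (by omega)
      (by intro i hi; rw [hlen, show L - L + i = i by omega]; exact hel i hi) (m-1) (by omega)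
    have hm : pat 1 2 3 (m-1) = m := by interval_cases m <;> simp [pat]
    rwa [hm] at h
  · refine ⟨1, 2, 3, h12, h13, h23, by omega, by omega, by omega, by omega, by omega, by omega,
      by omega, ?_⟩
    intro i hi
    rw [hlen, show L - L + i = i by omega]
    exact hel i hi

theorem inv_step (L n : ℕ) (hL : 5 ≤ L) (hn : 3 ≤ n) (s : List ℕ) (hs : Inv L n s) :
    Inv L (n+1) (s ++ (seg3 (el s (s.length - 2)) (el s (s.length - 1)) (n+1) L).drop 2) := by
  obtain ⟨p, q, r, hpq, hpr, hqr, -, -, -, -, -, -, hLlen, hsuf⟩ := hs.suffixblk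
  set len := s.length with hlendef
  set x := el s (len - 2) with hxdef
  set y := el s (len - 1) with hydef
  set z := n + 1 with hzdef
  set s' := s ++ (seg3 x y z L).drop 2 with hs'def
  have hx : x = pat p q r (L - 2) := by
    rw [hxdef, show len - 2 = len - L + (L - 2) by omega]
    exact hsuf (L-2) (by omega)
  have hy : y = pat p q r (L - 1) := by
    rw [hydef, show len - 1 = len - L + (L - 1) by omega]
    exact hsuf (L-1) (by omega)
  have hxy : x ≠ y := by
    rw [hx, hy]; exact pat_ne p q r hpq hpr hqr (by omega) (by omega)
  have hxmem : 1 ≤ x ∧ x ≤ n := hs.mem (len - 2) (by omega)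
  have hymem : 1 ≤ y ∧ y ≤ n := hs.mem (len - 1) (by omega)
  have hxz : x ≠ z := by omega
  have hyz : y ≠ z := by omega
  have hlen' : s'.length = len + (L - 2) := by
    rw [hs'def]; simp; rfl
  have hleft : ∀ j < len, el s' j = el s j := fun j hj => el_append_left _ _ _ hj
  have hu : ∀ i < L, el s' (len - 2 + i) = pat x y z i := by
    intro i hi
    rcases Nat.lt_or_ge i 2 with h2 | h2
    · rw [hleft _ (by omega)]
      interval_cases i
      · rw [show len - 2 + 0 = len - 2 by omega, ← hxdef]; simp [pat]
      · rw [show len - 2 + 1 = len - 1 by omega, ← hydef]; simp [pat]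
    · rw [hs'def, el_append_right _ _ _ (by omega),
        show len - 2 + i - len = i - 2 by omega, el_drop,
        show 2 + (i - 2) = i by omega]
      exact el_seg3 x y z L i hi
  have hrmem : ∀ j, len ≤ j → j < len + (L - 2) → el s' j = pat x y z (j - (len - 2)) := by
    intro j h1 h2
    rw [show j = len - 2 + (j - (len - 2)) by omega]
    rw [hu (j - (len - 2)) (by omega)]
    congr 1
    omega
  have hrmem2 : ∀ j, len - 2 ≤ j → j < len + (L - 2) → el s' j = pat x y z (j - (len - 2)) := by
    intro j h1 h2
    have h3 : j - (len - 2) < L := by omega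
    have := hu (j - (len - 2)) h3
    rwa [show len - 2 + (j - (len - 2)) = j by omega] at this
  constructor
  · have e : n + 1 - 3 = (n - 3) + 1 := by omega
    have h0 := hs.hlen
    rw [hlen', hzdef, e, Nat.succ_mul]
    omega
  · -- sparse
    intro i j hij h3 hj
    rw [hlen'] at hj
    rcases Nat.lt_or_ge j len with hjl | hjl
    · rw [hleft i (by omega), hleft j hjl]
      exact hs.sparse i j hij h3 hjl
    · have hi2 : len - 2 ≤ i := by omega
      rw [hrmem2 i (by omega) (by omega), hrmem2 j (by omega) hj]
      exact pat_ne x y z hxy hxz hyz (by omega) (by omega)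
  · -- mem
    intro i hi
    rw [hlen'] at hi
    rcases Nat.lt_or_ge i len with hil | hil
    · rw [hleft i hil]
      have := hs.mem i hil
      omega
    · rw [hrmem2 i (by omega) hi]
      rcases pat_mem x y z (i - (len - 2)) with h|h|h <;> omega
  · -- pre
    intro i hi
    rw [hleft i (by omega)]
    exact hs.pre i hi
  · -- spacing
    intro i j hij hj heq
    rw [hlen'] at hj
    rcases Nat.lt_or_ge j len with hjl | hjl
    · rw [hleft i (by omega), hleft j hjl] at heq
      obtain ⟨h1, h2⟩ := hs.spacing i j hij hjl heq
      refine ⟨?_, h2⟩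
      rw [hleft (i+3) (by omega), hleft i (by omega)]
      exact h1
    · rcases Nat.lt_or_ge i (len - 2) with hil | hil
      · -- i in old part, j in new part
        rw [hleft i (by omega), hrmem j hjl hj] at heq
        have hmn : el s i ≤ n := (hs.mem i (by omega)).2
        rcases pat_mem x y z (j - (len - 2)) with h|h|h
        · -- m = x
          have hocc : el s i = el s (len - 2) := by rw [heq, h, hxdef]
          obtain ⟨h1, h2⟩ := hs.spacing i (len - 2) hil (by omega) hocc
          exact ⟨by rw [hleft (i+3) (by omega), hleft i (by omega)]; exact h1, by omega⟩
        · -- m = y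
          have hocc : el s i = el s (len - 1) := by rw [heq, h, hydef]
          obtain ⟨h1, h2⟩ := hs.spacing i (len - 1) (by omega) (by omega) hocc
          exact ⟨by rw [hleft (i+3) (by omega), hleft i (by omega)]; exact h1, by omega⟩
        · rw [heq, h] at hmn; omega
      · -- both in suffix window
        have hju : el s' j = pat x y z (j - (len - 2)) := hrmem2 j (by omega) hj
        have hiu : el s' i = pat x y z (i - (len - 2)) := hrmem2 i (by omega) (by omega)
        rw [hiu, hju] at heq
        have hmod := pat_inj x y z hxy hxz hyz heq
        have h2 : i + 3 ≤ j := by omega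
        refine ⟨?_, h2⟩
        rw [hiu, hrmem2 (i+3) (by omega) (by omega)]
        exact pat_congr _ _ _ _ _ (by omega)
  · -- occurs
    intro m h1 hm
    rcases Nat.lt_or_ge m (n+1) with hmn | hmn
    · obtain ⟨i, hi, hel⟩ := hs.occurs m h1 (by omega)
      exact ⟨i, by omega, by rw [hleft i hi]; exact hel⟩
    · have hmz : m = z := by omega
      refine ⟨len, by omega, ?_⟩
      rw [show len = len - 2 + 2 by omega, hu 2 (by omega), hmz]
      simp [pat]
  · -- blockR
    intro m h3 hm
    rcases Nat.lt_or_ge m (n+1) with hmn | hmn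
    · obtain ⟨S, x0, y0, hd1, hd2, hd3, hSL, hpat, hne⟩ := hs.blockR m h3 (by omega)
      refine ⟨S, x0, y0, hd1, hd2, hd3, by omega, ?_, ?_⟩
      · intro i hi; rw [hleft _ (by omega)]; exact hpat i hi
      · intro idx hidx; rw [hleft _ (by omega)]; exact hne idx hidx
    · have hmz : m = z := by omega
      subst hmz
      refine ⟨len - 2, x, y, hxy, hxz, hyz, by omega, hu, ?_⟩
      intro idx hidx
      rw [hleft _ (by omega)]
      have := hs.mem idx (by omega)
      omega
  · -- lastocc
    intro m h1 hm
    by_cases hxyz : m = x ∨ m = y ∨ m = z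
    · have hsuf' : ∀ i < L, el s' (s'.length - L + i) = pat x y z i := by
        intro i hi
        rw [hlen', show len + (L - 2) - L + i = len - 2 + i by omega]
        exact hu i hi
      have hφ : ∃ φ, φ < 3 ∧ pat x y z φ = m := by
        rcases hxyz with h|h|h
        · exact ⟨0, by omega, by simp [pat, h]⟩
        · exact ⟨1, by omega, by simp [pat, h]⟩
        · exact ⟨2, by omega, by simp [pat, h]⟩
      obtain ⟨φ, hφ3, hφm⟩ := hφ
      have := lastocc_of_suffix L hL s' x y z hxy hxz hyz (by omega) hsuf' φ hφ3
      rwa [hφm] at this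
    · push_neg at hxyz
      obtain ⟨hmx, hmy, hmz⟩ := hxyz
      obtain ⟨l, hl, hel, hnl, hclause⟩ := hs.lastocc m h1 (by omega)
      have hl3 : l + 3 ≤ len := by
        rcases Nat.lt_or_ge l (len - 2) with h | h
        · omega
        · exfalso
          rcases (show l = len - 2 ∨ l = len - 1 by omega) with h'|h'
          · exact hmx (by rw [hxdef, ← h', hel])
          · exact hmy (by rw [hydef, ← h', hel])
      refine ⟨l, by omega, by rw [hleft l hl]; exact hel, ?_, ?_⟩
      · intro idx hlt hidx
        rw [hlen'] at hidx
        rcases Nat.lt_or_ge idx len with h | h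
        · rw [hleft idx h]; exact hnl idx hlt h
        · rw [hrmem2 idx (by omega) hidx]
          rcases pat_mem x y z (idx - (len - 2)) with h'|h'|h' <;> rw [h'] <;> omega
      · intro _
        obtain ⟨p', q', r', hd1, hd2, hd3, hLl, hpat, hlast⟩ := hclause hl3
        refine ⟨p', q', r', hd1, hd2, hd3, hLl, ?_, hlast⟩
        intro i hi
        rw [hleft _ (by omega)]
        exact hpat i hi
  · -- suffixblk
    refine ⟨x, y, z, hxy, hxz, hyz, by omega, by omega, by omega, by omega, by omega, by omega,
      by omega, ?_⟩
    intro i hi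
    rw [hlen', show len + (L - 2) - L + i = len - 2 + i by omega]
    exact hu i hi

theorem sFam_inv (L : ℕ) (hL : 5 ≤ L) : ∀ k, Inv L (k+3) (sFam L (k+3)) := by
  intro k
  induction k with
  | zero => exact inv_base L hL
  | succ k ih => exact inv_step L (k+3) hL (by omega) _ ih

end Work

open Work in
theorem stmt13 {α : Type*} [DecidableEq α] (u : List α) (a b c : α)
    (hlen : 6 ≤ u.length)
    (hab : a ≠ b) (hac : a ≠ c) (hbc : b ≠ c)
    (hletters : u.toFinset = {a, b, c})
    (hfirst : u.take 3 = [a, b, c])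
    -- the last three letters of `u` form a permutation of `{a,b,c}`:
    (hlast : ∃ x y z : α, u.drop (u.length - 3) = [x, y, z] ∧
      ({x, y, z} : Finset α) = {a, b, c})
    (L : ℕ)
    -- `L` is the length of `s₃(u)`, the longest initial segment of `1,2,3,1,2,3,…`
    -- avoiding `u`:
    (havoid : ¬ ContainsCopy (seg3 1 2 3 L) u)
    (hmax : ContainsCopy (seg3 1 2 3 (L + 1)) u) :
    ∀ n : ℕ, 3 ≤ n → Semisaturated u (sFam L n) (Set.Icc 1 n) := by
  have hcard : u.toFinset.card = 3 := by
    rw [hletters, Finset.card_insert_of_notMem (by simp [hab, hac]),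
      Finset.card_insert_of_notMem (by simp [hbc]), Finset.card_singleton]
  have hL5 : 5 ≤ L := by
    have h1 := length_le_of_containsCopy hmax
    rw [length_seg3] at h1
    omega
  intro n hn
  have inv : Work.Inv L n (sFam L n) := by
    have := sFam_inv L hL5 (n - 3)
    rwa [show n - 3 + 3 = n by omega] at this
  set s := sFam L n with hsdef
  have hLlen : L ≤ s.length := by
    have := inv.hlen; omega
  refine ⟨?_, ?_, ?_⟩
  · rw [hcard]
    exact (sparse_iff_el s).2 inv.sparse
  · intro v hv
    obtain ⟨i, hi, hvi⟩ := List.mem_iff_getElem.1 hv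
    have := inv.mem i hi
    rw [el_eq_getElem s i hi, hvi] at this
    exact Set.mem_Icc.mpr this
  · intro m hmem g hg
    rw [hcard]
    rw [Set.mem_Icc] at hmem
    by_cases hsp : Sparse 3 (s.insertIdx g m)
    on_goal 2 => exact Or.inl hsp
    right
    set t := s.insertIdx g m with htdef
    have tEq : t = s.take g ++ m :: s.drop g := insertIdx_eq m g s hg
    have htakelen : (s.take g).length = g := by
      rw [List.length_take]; omega
    have htlen : t.length = s.length + 1 := by
      rw [tEq]; simp; omega
    have hel_lt : ∀ i, i < g → el t i = el s i := by
      intro i hi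
      rw [tEq, el_append_left _ _ _ (by omega)]
      exact el_take s g i hi
    have hel_self : el t g = m := by
      rw [tEq, el_append_right _ _ _ (by omega), show g - (s.take g).length = 0 by omega]
      rfl
    have hel_gt : ∀ i, g ≤ i → el t (i+1) = el s i := by
      intro i hi
      rw [tEq, el_append_right _ _ _ (by omega),
        show i + 1 - (s.take g).length = (i - g) + 1 by omega, el_cons_succ, el_drop,
        show g + (i - g) = i by omega]
    have hspel := (sparse_iff_el t).1 hsp
    have hm1 : 1 ≤ g → el s (g-1) ≠ m := by
      intro h1
      have := hspel (g-1) g (by omega) (by omega) (by omega)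
      rwa [hel_lt (g-1) (by omega), hel_self] at this
    have hm2 : 2 ≤ g → el s (g-2) ≠ m := by
      intro h1
      have := hspel (g-2) g (by omega) (by omega) (by omega)
      rwa [hel_lt (g-2) (by omega), hel_self] at this
    have hm3 : g < s.length → el s g ≠ m := by
      intro h1
      have := hspel g (g+1) (by omega) (by omega) (by omega)
      rw [hel_self, hel_gt g (le_refl g)] at this
      exact fun hc => this hc.symm
    have hm4 : g + 1 < s.length → el s (g+1) ≠ m := by
      intro h1
      have := hspel g (g+2) (by omega) (by omega) (by omega)
      rw [hel_self, show g + 2 = (g+1)+1 by omega, hel_gt (g+1) (by omega)] at this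
      exact fun hc => this hc.symm
    by_cases hbefore : ∃ idx, idx < g ∧ el s idx = m
    · obtain ⟨b0, hb0g, hb0⟩ := hbefore
      by_cases hafter : ∃ idx, g ≤ idx ∧ idx < s.length ∧ el s idx = m
      · exfalso
        obtain ⟨a0, ha0g, ha0len, ha0⟩ := hafter
        have climb : ∀ k idx, idx < g → el s idx = m → g ≤ idx + k →
            ∃ h, h < g ∧ g ≤ h + 3 ∧ el s h = m := by
          intro k
          induction k with
          | zero => exact fun idx h1 h2 h3 => ⟨idx, h1, by omega, h2⟩
          | succ k ih =>
            intro idx h1 h2 h3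
            rcases Nat.lt_or_ge (idx+3) g with h4 | h4
            · have hsp' := inv.spacing idx a0 (by omega) ha0len (by rw [h2, ha0])
              exact ih (idx+3) h4 (by rw [hsp'.1, h2]) (by omega)
            · exact ⟨idx, h1, h4, h2⟩
        obtain ⟨h, hhg, hg3, hh⟩ := climb g b0 hb0g hb0 (by omega)
        rcases (show h + 1 = g ∨ h + 2 = g ∨ h + 3 = g by omega) with h'|h'|h'
        · exact hm1 (by omega) (by rw [show g - 1 = h by omega]; exact hh)
        · exact hm2 (by omega) (by rw [show g - 2 = h by omega]; exact hh)
        · have hsp' := inv.spacing h a0 (by omega) ha0len (by rw [hh, ha0])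
          refine hm3 (by omega) ?_
          rw [← h', hsp'.1, hh]
      · push_neg at hafter
        obtain ⟨l, hllen, hlm, hnl, hclause⟩ := inv.lastocc m hmem.1 hmem.2
        have hlg : l < g := by
          by_contra hc
          push_neg at hc
          exact hafter l hc hllen hlm
        have hl3 : l + 3 ≤ g := by
          by_contra hc
          push_neg at hc
          rcases (show l = g - 1 ∨ l = g - 2 by omega) with h'|h'
          · exact hm1 (by omega) (by rw [← h']; exact hlm)
          · exact hm2 (by omega) (by rw [← h']; exact hlm)
        obtain ⟨p, q, r, hd1, hd2, hd3, hLl, hpat, hlast'⟩ := hclause (by omega)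
        have hsub : ((List.range L).map (pat p q r)).Sublist (s.take g) := by
          have hp2 : ∀ i, i < L → el (s.take g) (l + 3 - L + i) = pat p q r i := by
            intro i hi
            rw [el_take s g _ (by omega)]
            exact hpat i hi
          have := pattern_sublist (s.take g) (pat p q r) (l+3-L) L (by omega) hp2
          exact this.trans (List.drop_sublist _ _)
        have hwit : (seg3 p q r (L+1)).Sublist t := by
          rw [seg3_succ_last, hlast', tEq]
          exact List.Sublist.append (by rw [seg3_eq]; exact hsub)
            (List.Sublist.cons₂ m (List.nil_sublist _))
        exact contains_trans hmax (isCopy_seg3 (L+1) hd1 hd2 hd3) hwit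
    · push_neg at hbefore
      obtain ⟨i0, hi0len, hi0⟩ := inv.occurs m hmem.1 hmem.2
      have hm3' : 3 ≤ m := by
        by_contra hcon
        push_neg at hcon
        have p0 : el s 0 = 1 := by rw [inv.pre 0 (by omega)]; simp [pat]
        have p1 : el s 1 = 2 := by rw [inv.pre 1 (by omega)]; simp [pat]
        rcases (show m = 1 ∨ m = 2 by omega) with rfl | rfl
        · rcases Nat.eq_zero_or_pos g with hg0 | hg0
          · exact hm3 (by omega) (by rw [hg0]; exact p0)
          · exact hbefore 0 (by omega) p0
        · rcases (show g = 0 ∨ g = 1 ∨ 2 ≤ g by omega) with hg0 | hg0 | hg0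
          · exact hm4 (by omega) (by rw [hg0]; exact p1)
          · exact hm3 (by omega) (by rw [hg0]; exact p1)
          · exact hbefore 1 (by omega) p1
      obtain ⟨S, xx, yy, hd1, hd2, hd3, hSL, hpat, hne⟩ := inv.blockR m hm3' hmem.2
      have hocc2 : el s (S+2) = m := by
        rw [hpat 2 (by omega)]; simp [pat]
      have hSg : g ≤ S := by
        by_contra hc
        push_neg at hc
        rcases (show S + 2 < g ∨ S + 2 = g ∨ S + 2 = g + 1 by omega) with h|h|h
        · exact hbefore (S+2) h hocc2
        · exact hm3 (by omega) (h ▸ hocc2)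
        · refine hm4 (by omega) ?_
          rw [← h]; exact hocc2
      have hsub : ((List.range L).map (pat xx yy m)).Sublist (s.drop g) := by
        have h0 := pattern_sublist s (pat xx yy m) S L hSL hpat
        have hdd : s.drop S = (s.drop g).drop (S - g) := by
          rw [List.drop_drop]; congr 1; omega
        exact h0.trans (by rw [hdd]; exact List.drop_sublist _ _)
      have hwit : (seg3 m xx yy (L+1)).Sublist t := by
        rw [seg3_rot, tEq]
        refine List.Sublist.trans ?_ (List.sublist_append_right _ _)
        exact List.Sublist.cons₂ m (by rw [seg3_eq]; exact hsub)
      exact contains_trans hmax (isCopy_seg3 (L+1) hd2.symm hd3.symm hd1) hwit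
end
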